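/- arXiv:1901.00387 — 6 statements merged into one kernel-verified Lean document; each statement's English description precedes it below -/
import Mathlib

section
/- Fix m, L, w, t with 0 ≤ w ≤ L. Let P(m,L;w,t) = {(u₁,...,u_m) : L ≥ u₁ ≥ u₂ ≥ ... ≥ u_m ≥ 0 and Σᵢ |uᵢ − w| ≤ t}. Then |P(m,L;w,t)| ≤ N(t), where N(t) = Σ_{r=0}^{t} Σ_{i=0}^{r} p(i)·p(r−i) and p denotes the partition function. -/
open Finset

/-- The partition function `p(i)`: the number of partitions of `i`. -/
def partCount (i : ℕ) : ℕ := Fintype.card (Nat.Partition i)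

/-- `N(t) = Σ_{r=0}^{t} Σ_{i=0}^{r} p(i) p(r-i)`. -/
def Nval (t : ℕ) : ℕ :=
  ∑ r ∈ Finset.range (t + 1), ∑ i ∈ Finset.range (r + 1), partCount i * partCount (r - i)

/-- `P(m,L;w,t)`: non-increasing `m`-tuples with entries in `[0,L]` whose
ℓ₁-deviation from the constant tuple `(w,…,w)` is at most `t`. -/
def Pset (m L w t : ℕ) : Finset (Fin m → Fin (L + 1)) :=
  Finset.univ.filter (fun u =>
    (∀ i j : Fin m, i ≤ j → (u j : ℕ) ≤ (u i : ℕ)) ∧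
    ∑ i, ((u i : ℤ) - (w : ℤ)).natAbs ≤ t)

lemma sum_filter_pos (s : Multiset ℕ) : (s.filter (0 < ·)).sum = s.sum := by
  have h1 := congrArg Multiset.sum (Multiset.filter_add_not (0 < ·) s)
  rw [Multiset.sum_add] at h1
  have h0 : (Multiset.filter (fun x => ¬ 0 < x) s).sum = 0 := by
    apply Multiset.sum_eq_zero
    intro x hx
    have := Multiset.of_mem_filter hx
    omega
  omega

/-- A partition from the positive values of a tuple. -/
def mkPart {m : ℕ} (f : Fin m → ℕ) : Nat.Partition (∑ i, f i) where
  parts := (↑(List.ofFn f) : Multiset ℕ).filter (0 < ·)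
  parts_pos := fun hi => Multiset.of_mem_filter hi
  parts_sum := by rw [sum_filter_pos]; simp [List.sum_ofFn]

def castPart {a b : ℕ} (h : a = b) (p : Nat.Partition a) : Nat.Partition b :=
  ⟨p.parts, p.parts_pos, h ▸ p.parts_sum⟩

@[simp] lemma castPart_parts {a b : ℕ} (h : a = b) (p : Nat.Partition a) :
    (castPart h p).parts = p.parts := rfl

@[simp] lemma mkPart_parts {m : ℕ} (f : Fin m → ℕ) :
    (mkPart f).parts = (↑(List.ofFn f) : Multiset ℕ).filter (0 < ·) := rfl

lemma multiset_eq_of_filter_pos_eq {s t : Multiset ℕ}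
    (hc : Multiset.card s = Multiset.card t)
    (h : s.filter (0 < ·) = t.filter (0 < ·)) : s = t := by
  have hs := Multiset.filter_add_not (0 < ·) s
  have ht := Multiset.filter_add_not (0 < ·) t
  have hrep : ∀ (r : Multiset ℕ), r.filter (fun x => ¬ 0 < x) =
      Multiset.replicate (Multiset.card (r.filter (fun x => ¬ 0 < x))) 0 := by
    intro r
    rw [Multiset.eq_replicate_card]
    intro x hx
    have := Multiset.of_mem_filter hx
    omega
  have hcard : Multiset.card (s.filter (fun x => ¬ 0 < x)) =
      Multiset.card (t.filter (fun x => ¬ 0 < x)) := by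
    have h1 := congrArg Multiset.card hs
    have h2 := congrArg Multiset.card ht
    have h3 := congrArg Multiset.card h
    simp only [Multiset.card_add] at h1 h2
    omega
  rw [← hs, ← ht, h, hrep s, hrep t, hcard]

lemma ofFn_eq_of_coe_eq {m : ℕ} {f g : Fin m → ℕ}
    (hf : ∀ i j : Fin m, i ≤ j → f j ≤ f i) (hg : ∀ i j : Fin m, i ≤ j → g j ≤ g i)
    (h : (↑(List.ofFn f) : Multiset ℕ) = ↑(List.ofFn g)) : f = g := by
  have hperm : (List.ofFn f).Perm (List.ofFn g) := Multiset.coe_eq_coe.mp h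
  have hsf : (List.ofFn f).Pairwise (· ≥ ·) := by
    rw [List.pairwise_ofFn]; intro i j hij; exact hf i j hij.le
  have hsg : (List.ofFn g).Pairwise (· ≥ ·) := by
    rw [List.pairwise_ofFn]; intro i j hij; exact hg i j hij.le
  exact List.ofFn_injective (hperm.eq_of_pairwise' hsf hsg)

lemma ofFn_eq_of_coe_eq' {m : ℕ} {f g : Fin m → ℕ}
    (hf : ∀ i j : Fin m, i ≤ j → f i ≤ f j) (hg : ∀ i j : Fin m, i ≤ j → g i ≤ g j)
    (h : (↑(List.ofFn f) : Multiset ℕ) = ↑(List.ofFn g)) : f = g := by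
  have hperm : (List.ofFn f).Perm (List.ofFn g) := Multiset.coe_eq_coe.mp h
  have hsf : (List.ofFn f).Pairwise (· ≤ ·) := by
    rw [List.pairwise_ofFn]; intro i j hij; exact hf i j hij.le
  have hsg : (List.ofFn g).Pairwise (· ≤ ·) := by
    rw [List.pairwise_ofFn]; intro i j hij; exact hg i j hij.le
  exact List.ofFn_injective (hperm.eq_of_pairwise' hsf hsg)

lemma parts_heq {r r' : ℕ} (h : r = r')
    {x : Σ i : ℕ, Nat.Partition i × Nat.Partition (r - i)}
    {y : Σ i : ℕ, Nat.Partition i × Nat.Partition (r' - i)}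
    (hxy : HEq x y) : x.1 = y.1 ∧ x.2.1.parts = y.2.1.parts ∧ x.2.2.parts = y.2.2.parts := by
  subst h
  rw [eq_of_heq hxy]
  exact ⟨rfl, rfl, rfl⟩

/-- Proposition 1 (upper bound): `|P(m,L;w,t)| ≤ N(t)`. -/
theorem stmt_2 (m L w t : ℕ) (hw : w ≤ L) :
    (Pset m L w t).card ≤ Nval t := by
  classical
  set A : (Fin m → Fin (L+1)) → ℕ := fun u => ∑ i, ((u i : ℕ) - w) with hA
  set B : (Fin m → Fin (L+1)) → ℕ := fun u => ∑ i, (w - (u i : ℕ)) with hB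
  set F : (Fin m → Fin (L+1)) → (Σ r : ℕ, Σ i : ℕ, Nat.Partition i × Nat.Partition (r - i)) :=
    fun u => ⟨A u + B u, A u,
      (mkPart (fun i => (u i : ℕ) - w),
       castPart (by simp only [hA, hB]; omega) (mkPart (fun i => w - (u i : ℕ))))⟩ with hF
  set S : Finset (Σ r : ℕ, Σ i : ℕ, Nat.Partition i × Nat.Partition (r - i)) :=
    (Finset.range (t+1)).sigma (fun r => (Finset.range (r+1)).sigma
      (fun i => (Finset.univ : Finset (Nat.Partition i × Nat.Partition (r - i))))) with hS
  have hScard : S.card = Nval t := by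
    simp [hS, Finset.card_sigma, Nval, partCount, Fintype.card_prod]
  rw [← hScard]
  apply Finset.card_le_card_of_injOn F
  · intro u hu
    simp only [Pset, Finset.mem_coe, Finset.mem_filter, Finset.mem_univ, true_and] at hu
    obtain ⟨hmono, hsum⟩ := hu
    have hab : A u + B u ≤ t := by
      rw [hA, hB, ← Finset.sum_add_distrib]
      calc ∑ i, (((u i : ℕ) - w) + (w - (u i : ℕ)))
          = ∑ i, ((u i : ℤ) - (w : ℤ)).natAbs :=
            Finset.sum_congr rfl (fun i _ => by omega)
        _ ≤ t := hsum
    simp only [hS, hF, Finset.mem_coe, Finset.mem_sigma, Finset.mem_range, Finset.mem_univ, and_true]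
    omega
  · intro u hu v hv huv
    simp only [Pset, Finset.mem_coe, Finset.mem_filter, Finset.mem_univ, true_and] at hu hv
    simp only [hF] at huv
    have h1 : A u + B u = A v + B v := congrArg Sigma.fst huv
    have h2 := (Sigma.mk.inj_iff.mp huv).2
    obtain ⟨ha, hpos, hneg⟩ := parts_heq h1 h2
    simp only [mkPart_parts, castPart_parts] at hpos hneg
    have hcardf : Multiset.card (↑(List.ofFn (fun i => (u i : ℕ) - w)) : Multiset ℕ) =
        Multiset.card (↑(List.ofFn (fun i => (v i : ℕ) - w)) : Multiset ℕ) := by simp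
    have hcardg : Multiset.card (↑(List.ofFn (fun i => w - (u i : ℕ))) : Multiset ℕ) =
        Multiset.card (↑(List.ofFn (fun i => w - (v i : ℕ))) : Multiset ℕ) := by simp
    have hf : (fun i => (u i : ℕ) - w) = (fun i => (v i : ℕ) - w) :=
      ofFn_eq_of_coe_eq (fun i j hij => Nat.sub_le_sub_right (hu.1 i j hij) w)
        (fun i j hij => Nat.sub_le_sub_right (hv.1 i j hij) w)
        (multiset_eq_of_filter_pos_eq hcardf hpos)
    have hg : (fun i => w - (u i : ℕ)) = (fun i => w - (v i : ℕ)) :=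
      ofFn_eq_of_coe_eq'
        (fun i j hij => Nat.sub_le_sub_left (hu.1 i j hij) w)
        (fun i j hij => Nat.sub_le_sub_left (hv.1 i j hij) w)
        (multiset_eq_of_filter_pos_eq hcardg hneg)
    funext i
    have h3 := congrFun hf i
    have h4 := congrFun hg i
    exact Fin.ext (by omega)
end

section
/- Fix m, L, w, t with m ≥ t and t ≤ min{w, L−w}. Then |P(m,L;w,t)| = N(t), where N(t) = Σ_{r=0}^{t} Σ_{i=0}^{r} p(i)·p(r−i). -/
open Finset

namespace Stmt3Aux

/-! ### List lemmas -/

lemma getD_anti {l : List ℕ} (hl : l.Pairwise (· ≥ ·)) {j k : ℕ} (h : j ≤ k) :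
    l.getD k 0 ≤ l.getD j 0 := by
  rcases lt_or_ge k l.length with hk | hk
  · have hj : j < l.length := lt_of_le_of_lt h hk
    rw [List.getD_eq_getElem _ _ hk, List.getD_eq_getElem _ _ hj]
    rcases eq_or_lt_of_le h with rfl | hlt
    · exact le_refl _
    · exact List.pairwise_iff_get.mp hl ⟨j, hj⟩ ⟨k, hk⟩ hlt
  · rw [List.getD_eq_default _ _ hk]; exact Nat.zero_le _

lemma getD_zero_of_all_zero {l : List ℕ} (h : ∀ x ∈ l, x = 0) (k : ℕ) :
    l.getD k 0 = 0 := by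
  rcases lt_or_ge k l.length with hk | hk
  · rw [List.getD_eq_getElem _ _ hk]; exact h _ (List.getElem_mem hk)
  · exact List.getD_eq_default _ _ hk

lemma getD_filter {l : List ℕ} (hl : l.Pairwise (· ≥ ·)) (j : ℕ) :
    (l.filter (fun x => x ≠ 0)).getD j 0 = l.getD j 0 := by
  induction l generalizing j with
  | nil => simp
  | cons a tl ih =>
    have htl : tl.Pairwise (· ≥ ·) := hl.of_cons
    by_cases ha : a = 0
    · subst ha
      have hall : ∀ x ∈ (0 :: tl), x = 0 := by
        intro x hx
        rcases List.mem_cons.mp hx with rfl | hx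
        · rfl
        · exact Nat.le_zero.mp (List.rel_of_pairwise_cons hl hx)
      have hfil : (0 :: tl).filter (fun x => x ≠ 0) = [] := by
        rw [List.filter_eq_nil_iff]
        intro x hx
        simpa using hall x hx
      rw [hfil, getD_zero_of_all_zero hall]
      simp
    · rw [List.filter_cons_of_pos (by simpa using ha)]
      cases j with
      | zero => rfl
      | succ j' => simpa using ih htl j'

lemma sum_getD (l : List ℕ) (n : ℕ) (h : l.length ≤ n) :
    ∑ j ∈ Finset.range n, l.getD j 0 = l.sum := by
  induction l generalizing n with
  | nil => simp
  | cons a tl ih =>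
    cases n with
    | zero => simp at h
    | succ n' =>
      rw [Finset.sum_range_succ']
      simp only [List.getD_cons_succ, List.getD_cons_zero]
      rw [ih n' (by simpa using h), List.sum_cons, Nat.add_comm]

lemma filter_sum (l : List ℕ) : (l.filter (fun x => x ≠ 0)).sum = l.sum := by
  induction l with
  | nil => simp
  | cons a tl ih =>
    rw [List.filter_cons]
    by_cases h : a = 0
    · simp only [h, List.sum_cons, Nat.zero_add]
      rw [if_neg (by simp)]
      exact ih
    · rw [if_pos (by simpa using h), List.sum_cons, List.sum_cons, ih]

lemma ofFn_getD (m : ℕ) (l : List ℕ) (h : l.length ≤ m) :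
    (List.ofFn fun j : Fin m => l.getD j 0) = l ++ List.replicate (m - l.length) 0 := by
  apply List.ext_getElem (by simp; omega)
  intro j h1 h2
  simp only [List.getElem_ofFn]
  rcases lt_or_ge j l.length with hj | hj
  · rw [List.getElem_append_left hj, List.getD_eq_getElem _ _ hj]
  · rw [List.getElem_append_right hj, List.getElem_replicate,
      List.getD_eq_default _ _ hj]

lemma filter_ofFn_getD (m : ℕ) (l : List ℕ) (h : l.length ≤ m)
    (hpos : ∀ x ∈ l, x ≠ 0) :
    (List.ofFn fun j : Fin m => l.getD j 0).filter (fun x => x ≠ 0) = l := by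
  rw [ofFn_getD m l h, List.filter_append,
    List.filter_eq_self.mpr (fun x hx => by simpa using hpos x hx)]
  simp

lemma getD_ofFn {m : ℕ} (f : Fin m → ℕ) (j : ℕ) (hj : j < m) :
    (List.ofFn f).getD j 0 = f ⟨j, hj⟩ := by
  rw [List.getD_eq_getElem _ _ (by simpa using hj)]
  simp

/-! ### Partitions from lists -/

def mkPart (l : List ℕ) (n : ℕ) (h : l.sum = n) : Nat.Partition n where
  parts := ↑(l.filter (fun x => x ≠ 0))
  parts_pos := by
    intro i hi
    rw [Multiset.mem_coe, List.mem_filter] at hi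
    have := hi.2
    simp at this
    omega
  parts_sum := by rw [Multiset.sum_coe, filter_sum, h]

variable {n : ℕ}

lemma sort_sum (p : Nat.Partition n) : (Multiset.sort p.parts (· ≥ ·)).sum = n := by
  rw [← Multiset.sum_coe, Multiset.sort_eq, p.parts_sum]

lemma sort_length_le (p : Nat.Partition n) :
    (Multiset.sort p.parts (· ≥ ·)).length ≤ n := by
  have h := Multiset.card_nsmul_le_sum (s := p.parts) (a := 1)
    (fun x hx => p.parts_pos hx)
  rw [smul_eq_mul, mul_one, p.parts_sum] at h
  rw [Multiset.length_sort]
  exact h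

lemma sort_getD_le (p : Nat.Partition n) (j : ℕ) :
    (Multiset.sort p.parts (· ≥ ·)).getD j 0 ≤ n := by
  set l := Multiset.sort p.parts (· ≥ ·) with hl
  rcases lt_or_ge j l.length with hj | hj
  · rw [List.getD_eq_getElem _ _ hj]
    have hmem : l[j] ∈ p.parts := by
      rw [← Multiset.mem_sort (· ≥ ·)]
      exact List.getElem_mem hj
    have := Multiset.single_le_sum (fun x _ => Nat.zero_le x) _ hmem
    rwa [p.parts_sum] at this
  · rw [List.getD_eq_default _ _ hj]; exact Nat.zero_le _

lemma sort_pos (p : Nat.Partition n) :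
    ∀ x ∈ Multiset.sort p.parts (· ≥ ·), x ≠ 0 := by
  intro x hx
  have := p.parts_pos ((Multiset.mem_sort (· ≥ ·)).mp hx)
  omega

lemma sort_of_sorted {l : List ℕ} (hl : l.Pairwise (· ≥ ·)) :
    Multiset.sort (↑l : Multiset ℕ) (· ≥ ·) = l :=
  List.Perm.eq_of_pairwise' (Multiset.pairwise_sort _ _) hl
    (Multiset.coe_eq_coe.mp (Multiset.sort_eq _ _))

/-! ### The maps -/

def fwd (m w : ℕ) (v : Fin m → ℕ) :
    Σ r : ℕ, Σ i : ℕ, Nat.Partition i × Nat.Partition (r - i) :=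
  ⟨∑ j, ((v j - w) + (w - v j)), ∑ j, (v j - w),
   mkPart (List.ofFn fun j => v j - w) _ (by rw [List.sum_ofFn]),
   mkPart (List.ofFn fun j => w - v (Fin.rev j)) _ (by
     rw [List.sum_ofFn]
     rw [show (∑ j : Fin m, (w - v (Fin.rev j))) = ∑ j : Fin m, (w - v j) from
       Equiv.sum_comp Fin.revPerm (fun j => w - v j)]
     rw [Finset.sum_add_distrib]
     omega)⟩

def bwd (m w : ℕ) (r i : ℕ) (p : Nat.Partition i) (q : Nat.Partition (r - i)) (j : ℕ) : ℕ :=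
  w + (Multiset.sort p.parts (· ≥ ·)).getD j 0
    - (Multiset.sort q.parts (· ≥ ·)).getD (m - 1 - j) 0

def bwdF (m L w : ℕ) (s : Σ r : ℕ, Σ i : ℕ, Nat.Partition i × Nat.Partition (r - i)) :
    Fin m → Fin (L + 1) :=
  fun j => ⟨min (bwd m w s.1 s.2.1 s.2.2.1 s.2.2.2 j) L, by omega⟩

def Tset (t : ℕ) : Finset (Σ r : ℕ, Σ i : ℕ, Nat.Partition i × Nat.Partition (r - i)) :=
  (Finset.range (t + 1)).sigma fun r => (Finset.range (r + 1)).sigma fun _ => Finset.univ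

lemma Tset_card (t : ℕ) : (Tset t).card = Nval t := by
  rw [Tset, Finset.card_sigma]
  refine Finset.sum_congr rfl fun r _ => ?_
  rw [Finset.card_sigma]
  refine Finset.sum_congr rfl fun i _ => ?_
  rw [Finset.card_univ, Fintype.card_prod, partCount, partCount]

lemma mem_Tset {t : ℕ} {s : Σ r : ℕ, Σ i : ℕ, Nat.Partition i × Nat.Partition (r - i)} :
    s ∈ Tset t ↔ s.1 ≤ t ∧ s.2.1 ≤ s.1 := by
  obtain ⟨r, i, pq⟩ := s
  simp [Tset, Finset.mem_sigma, Nat.lt_succ_iff]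

lemma sig_ext {r1 r2 i1 i2 : ℕ} {p1 : Nat.Partition i1} {q1 : Nat.Partition (r1 - i1)}
    {p2 : Nat.Partition i2} {q2 : Nat.Partition (r2 - i2)}
    (hr : r1 = r2) (hi : i1 = i2) (hp : p1.parts = p2.parts) (hq : q1.parts = q2.parts) :
    (⟨r1, i1, (p1, q1)⟩ : Σ r : ℕ, Σ i : ℕ, Nat.Partition i × Nat.Partition (r - i))
      = ⟨r2, i2, (p2, q2)⟩ := by
  subst hr; subst hi
  obtain rfl : p1 = p2 := Nat.Partition.ext hp
  obtain rfl : q1 = q2 := Nat.Partition.ext hq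
  rfl

end Stmt3Aux

namespace Stmt3Aux

section Core

variable {m L w t r i : ℕ} {p : Nat.Partition i} {q : Nat.Partition (r - i)}

lemma bwd_disj (hm : t ≤ m) (hi : i ≤ r) (hr : r ≤ t) (j : ℕ) (hj : j < m) :
    (Multiset.sort p.parts (· ≥ ·)).getD j 0 = 0 ∨
    (Multiset.sort q.parts (· ≥ ·)).getD (m - 1 - j) 0 = 0 := by
  by_contra h
  push_neg at h
  obtain ⟨h1, h2⟩ := h
  have lA : j < (Multiset.sort p.parts (· ≥ ·)).length := by
    by_contra hc
    exact h1 (List.getD_eq_default _ _ (not_lt.mp hc))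
  have lB : m - 1 - j < (Multiset.sort q.parts (· ≥ ·)).length := by
    by_contra hc
    exact h2 (List.getD_eq_default _ _ (not_lt.mp hc))
  have hA := sort_length_le p
  have hB := sort_length_le q
  omega

lemma bwd_exc (hm : t ≤ m) (htw : t ≤ w) (hi : i ≤ r) (hr : r ≤ t)
    (j : ℕ) (hj : j < m) :
    bwd m w r i p q j - w = (Multiset.sort p.parts (· ≥ ·)).getD j 0 := by
  have hd := bwd_disj (p := p) (q := q) hm hi hr j hj
  have hb : (Multiset.sort q.parts (· ≥ ·)).getD (m - 1 - j) 0 ≤ w :=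
    le_trans (sort_getD_le q _) (by omega)
  rw [bwd]
  omega

lemma bwd_dfc (hm : t ≤ m) (htw : t ≤ w) (hi : i ≤ r) (hr : r ≤ t)
    (j : ℕ) (hj : j < m) :
    w - bwd m w r i p q j = (Multiset.sort q.parts (· ≥ ·)).getD (m - 1 - j) 0 := by
  have hd := bwd_disj (p := p) (q := q) hm hi hr j hj
  have hb : (Multiset.sort q.parts (· ≥ ·)).getD (m - 1 - j) 0 ≤ w :=
    le_trans (sort_getD_le q _) (by omega)
  rw [bwd]
  omega

lemma bwd_le_L (hw : w ≤ L) (htLw : t ≤ L - w) (hi : i ≤ r) (hr : r ≤ t) (j : ℕ) :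
    bwd m w r i p q j ≤ L := by
  have hA : (Multiset.sort p.parts (· ≥ ·)).getD j 0 ≤ i := sort_getD_le p j
  rw [bwd]
  omega

lemma bwd_mono {j k : ℕ} (h : j ≤ k) :
    bwd m w r i p q k ≤ bwd m w r i p q j := by
  have hA : (Multiset.sort p.parts (· ≥ ·)).getD k 0
      ≤ (Multiset.sort p.parts (· ≥ ·)).getD j 0 :=
    getD_anti (Multiset.pairwise_sort _ _) h
  have hB : (Multiset.sort q.parts (· ≥ ·)).getD (m - 1 - j) 0
      ≤ (Multiset.sort q.parts (· ≥ ·)).getD (m - 1 - k) 0 :=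
    getD_anti (Multiset.pairwise_sort _ _) (by omega)
  rw [bwd, bwd]
  omega

lemma bwd_sumA (hm : t ≤ m) (hi : i ≤ r) (hr : r ≤ t) :
    ∑ j ∈ Finset.range m, (Multiset.sort p.parts (· ≥ ·)).getD j 0 = i := by
  rw [sum_getD _ _ (le_trans (sort_length_le p) (by omega)), sort_sum]

lemma bwd_sumB (hm : t ≤ m) (hi : i ≤ r) (hr : r ≤ t) :
    ∑ j ∈ Finset.range m, (Multiset.sort q.parts (· ≥ ·)).getD (m - 1 - j) 0 = r - i := by
  rw [Finset.sum_range_reflect (fun k => (Multiset.sort q.parts (· ≥ ·)).getD k 0) m]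
  rw [sum_getD _ _ (le_trans (sort_length_le q) (by omega)), sort_sum]

end Core

end Stmt3Aux

namespace Stmt3Aux

section RT

variable {m L w t r i : ℕ} {p : Nat.Partition i} {q : Nat.Partition (r - i)}

lemma fwd_bwd (hm : t ≤ m) (htw : t ≤ w) (hi : i ≤ r) (hr : r ≤ t) :
    fwd m w (fun j : Fin m => bwd m w r i p q ↑j)
      = (⟨r, i, (p, q)⟩ : Σ r : ℕ, Σ i : ℕ, Nat.Partition i × Nat.Partition (r - i)) := by
  have hexc : ∀ j : Fin m, bwd m w r i p q ↑j - w
      = (Multiset.sort p.parts (· ≥ ·)).getD ↑j 0 :=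
    fun j => bwd_exc hm htw hi hr ↑j j.isLt
  have hdfc : ∀ j : Fin m, w - bwd m w r i p q ↑j
      = (Multiset.sort q.parts (· ≥ ·)).getD (m - 1 - ↑j) 0 :=
    fun j => bwd_dfc hm htw hi hr ↑j j.isLt
  have h1 : (∑ j : Fin m, ((bwd m w r i p q ↑j - w) + (w - bwd m w r i p q ↑j))) = r := by
    rw [Finset.sum_congr rfl (fun j _ => by rw [hexc j, hdfc j])]
    rw [Finset.sum_add_distrib]
    rw [Fin.sum_univ_eq_sum_range (fun k => (Multiset.sort p.parts (· ≥ ·)).getD k 0) m,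
      Fin.sum_univ_eq_sum_range (fun k => (Multiset.sort q.parts (· ≥ ·)).getD (m - 1 - k) 0) m,
      bwd_sumA hm hi hr, bwd_sumB hm hi hr]
    omega
  have h2 : (∑ j : Fin m, (bwd m w r i p q ↑j - w)) = i := by
    rw [Finset.sum_congr rfl (fun j _ => hexc j)]
    rw [Fin.sum_univ_eq_sum_range (fun k => (Multiset.sort p.parts (· ≥ ·)).getD k 0) m,
      bwd_sumA hm hi hr]
  refine sig_ext h1 h2 ?_ ?_
  · show ↑((List.ofFn fun j : Fin m => bwd m w r i p q ↑j - w).filter (fun x => x ≠ 0))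
      = p.parts
    rw [show (List.ofFn fun j : Fin m => bwd m w r i p q ↑j - w)
        = List.ofFn fun j : Fin m => (Multiset.sort p.parts (· ≥ ·)).getD ↑j 0 from
      congrArg _ (funext hexc)]
    rw [filter_ofFn_getD m _ (le_trans (sort_length_le p) (by omega)) (sort_pos p)]
    exact Multiset.sort_eq _ _
  · show ↑((List.ofFn fun j : Fin m => w - bwd m w r i p q ↑(Fin.rev j)).filter
      (fun x => x ≠ 0)) = q.parts
    rw [show (List.ofFn fun j : Fin m => w - bwd m w r i p q ↑(Fin.rev j))
        = List.ofFn fun j : Fin m => (Multiset.sort q.parts (· ≥ ·)).getD ↑j 0 from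
      congrArg _ (funext fun j => by
        rw [hdfc (Fin.rev j)]
        congr 1
        rw [Fin.val_rev]
        have := j.isLt
        omega)]
    rw [filter_ofFn_getD m _ (le_trans (sort_length_le q) (by omega)) (sort_pos q)]
    exact Multiset.sort_eq _ _

lemma bwd_fwd (v : Fin m → ℕ) (hmono : ∀ a b : Fin m, a ≤ b → v b ≤ v a) (j : Fin m) :
    bwd m w (fwd m w v).1 (fwd m w v).2.1 (fwd m w v).2.2.1 (fwd m w v).2.2.2 ↑j = v j := by
  have hm0 : 0 < m := j.pos
  have hsA : (List.ofFn fun a : Fin m => v a - w).Pairwise (· ≥ ·) :=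
    List.pairwise_ofFn.mpr fun a b hab =>
      Nat.sub_le_sub_right (hmono a b (le_of_lt hab)) w
  have hsB : (List.ofFn fun a : Fin m => w - v (Fin.rev a)).Pairwise (· ≥ ·) :=
    List.pairwise_ofFn.mpr fun a b hab =>
      Nat.sub_le_sub_left (hmono (Fin.rev b) (Fin.rev a)
        (Fin.rev_le_rev.mpr (le_of_lt hab))) w
  have hA : Multiset.sort ((fwd m w v).2.2.1.parts) (· ≥ ·)
      = ((List.ofFn fun a : Fin m => v a - w).filter (fun x => x ≠ 0)) :=
    sort_of_sorted (List.Pairwise.filter _ hsA)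
  have hB : Multiset.sort ((fwd m w v).2.2.2.parts) (· ≥ ·)
      = ((List.ofFn fun a : Fin m => w - v (Fin.rev a)).filter (fun x => x ≠ 0)) :=
    sort_of_sorted (List.Pairwise.filter _ hsB)
  rw [bwd, hA, hB, getD_filter hsA, getD_filter hsB,
    getD_ofFn _ _ j.isLt, getD_ofFn _ _ (show m - 1 - ↑j < m by omega)]
  have hrev : Fin.rev (⟨m - 1 - ↑j, by omega⟩ : Fin m) = j := by
    apply Fin.ext
    rw [Fin.val_rev]
    have := j.isLt
    simp only
    omega
  rw [hrev]
  simp only [Fin.eta]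
  omega

end RT

end Stmt3Aux

/-- Proposition 1 (equality case): if `m ≥ t` and `t ≤ min{w, L-w}`,
then `|P(m,L;w,t)| = N(t)`. -/
theorem stmt_3 (m L w t : ℕ) (hw : w ≤ L) (hm : t ≤ m)
    (htw : t ≤ w) (htLw : t ≤ L - w) :
    (Pset m L w t).card = Nval t := by
  classical
  rw [← Stmt3Aux.Tset_card t]
  refine Finset.card_bij' (fun u _ => Stmt3Aux.fwd m w (fun j => (u j : ℕ)))
    (fun s _ => Stmt3Aux.bwdF m L w s) ?_ ?_ ?_ ?_
  · -- forward map lands in Tset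
    intro u hu
    rw [Pset, Finset.mem_filter] at hu
    obtain ⟨-, hmono, hdev⟩ := hu
    rw [Stmt3Aux.mem_Tset]
    constructor
    · show (∑ j : Fin m, (((u j : ℕ) - w) + (w - (u j : ℕ)))) ≤ t
      refine le_trans (le_of_eq (Finset.sum_congr rfl fun j _ => ?_)) hdev
      have : ((u j : ℤ) - (w : ℤ)).natAbs = ((u j : ℕ) - w) + (w - (u j : ℕ)) := by
        omega
      omega
    · show (∑ j : Fin m, ((u j : ℕ) - w))
        ≤ ∑ j : Fin m, (((u j : ℕ) - w) + (w - (u j : ℕ)))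
      exact Finset.sum_le_sum fun j _ => Nat.le_add_right _ _
  · -- backward map lands in Pset
    intro s hs
    obtain ⟨r, i, p, q⟩ := s
    rw [Stmt3Aux.mem_Tset] at hs
    obtain ⟨hrt, hir⟩ := hs
    have hval : ∀ j : Fin m, ((Stmt3Aux.bwdF m L w ⟨r, i, (p, q)⟩ j : ℕ))
        = Stmt3Aux.bwd m w r i p q ↑j :=
      fun j => min_eq_left (Stmt3Aux.bwd_le_L hw htLw hir hrt ↑j)
    rw [Pset, Finset.mem_filter]
    refine ⟨Finset.mem_univ _, fun a b hab => ?_, ?_⟩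
    · rw [hval a, hval b]
      exact Stmt3Aux.bwd_mono hab
    · have hpt : ∀ j : Fin m,
          (((Stmt3Aux.bwdF m L w ⟨r, i, (p, q)⟩ j : ℕ) : ℤ) - (w : ℤ)).natAbs
          = (Multiset.sort p.parts (· ≥ ·)).getD ↑j 0
            + (Multiset.sort q.parts (· ≥ ·)).getD (m - 1 - ↑j) 0 := by
        intro j
        have he := Stmt3Aux.bwd_exc (p := p) (q := q) hm htw hir hrt ↑j j.isLt
        have hd := Stmt3Aux.bwd_dfc (p := p) (q := q) hm htw hir hrt ↑j j.isLt
        rw [hval j]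
        omega
      calc ∑ j : Fin m, (((Stmt3Aux.bwdF m L w ⟨r, i, (p, q)⟩ j : ℤ)) - (w : ℤ)).natAbs
          = ∑ j : Fin m, ((Multiset.sort p.parts (· ≥ ·)).getD ↑j 0
            + (Multiset.sort q.parts (· ≥ ·)).getD (m - 1 - ↑j) 0) :=
            Finset.sum_congr rfl fun j _ => hpt j
        _ ≤ t := by
            rw [Finset.sum_add_distrib,
              Fin.sum_univ_eq_sum_range
                (fun k => (Multiset.sort p.parts (· ≥ ·)).getD k 0) m,
              Fin.sum_univ_eq_sum_range
                (fun k => (Multiset.sort q.parts (· ≥ ·)).getD (m - 1 - k) 0) m,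
              Stmt3Aux.bwd_sumA hm hir hrt, Stmt3Aux.bwd_sumB hm hir hrt]
            omega
  · -- bwd ∘ fwd = id
    intro u hu
    rw [Pset, Finset.mem_filter] at hu
    obtain ⟨-, hmono, -⟩ := hu
    funext j
    apply Fin.val_injective
    show min (Stmt3Aux.bwd m w _ _ _ _ ↑j) L = (u j : ℕ)
    rw [Stmt3Aux.bwd_fwd (fun a => (u a : ℕ)) hmono j]
    exact min_eq_left (Nat.lt_succ_iff.mp (u j).isLt)
  · -- fwd ∘ bwd = id
    intro s hs
    obtain ⟨r, i, p, q⟩ := s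
    rw [Stmt3Aux.mem_Tset] at hs
    obtain ⟨hrt, hir⟩ := hs
    have hval : (fun j : Fin m => ((Stmt3Aux.bwdF m L w ⟨r, i, (p, q)⟩ j : ℕ)))
        = fun j : Fin m => Stmt3Aux.bwd m w r i p q ↑j :=
      funext fun j => min_eq_left (Stmt3Aux.bwd_le_L hw htLw hir hrt ↑j)
    show Stmt3Aux.fwd m w (fun j => ((Stmt3Aux.bwdF m L w ⟨r, i, (p, q)⟩ j : ℕ)))
      = ⟨r, i, (p, q)⟩
    rw [hval]
    exact Stmt3Aux.fwd_bwd hm htw hir hrt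
end

section
/- If m ≥ t and t ≤ min{w, L−w}, then the map φ from P(m,L;w,t) to the set of pairs of partitions (λ₁,λ₂) with total weight at most t is a bijection. -/
open Finset

/-- The map `φ` sending `u` to the pair of partitions (given as multisets)
formed by the positive entries of `u - (w,…,w)` and the absolute values of
its negative entries. -/
def phi {m L : ℕ} (w : ℕ) (u : Fin m → Fin (L + 1)) : Multiset ℕ × Multiset ℕ :=
  ((((Finset.univ : Finset (Fin m)).val.map (fun i => ((u i : ℤ) - (w : ℤ)).toNat)).filter
      (fun x => 0 < x)),
   (((Finset.univ : Finset (Fin m)).val.map (fun i => ((w : ℤ) - (u i : ℤ)).toNat)).filter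
      (fun x => 0 < x)))

section AuxLemmas
variable {m L : ℕ}

lemma phi1_eq (w : ℕ) (u : Fin m → Fin (L+1)) :
    (phi w u).1 = Multiset.map (fun i => ((u i : ℕ) - w))
      ((Finset.univ : Finset (Fin m)).val.filter (fun i => w < (u i : ℕ))) := by
  unfold phi
  dsimp only
  rw [Multiset.filter_map]
  rw [Multiset.filter_congr (q := fun i => w < (u i : ℕ))
    (fun i _ => by simp only [Function.comp_apply]; omega)]
  apply Multiset.map_congr rfl
  intro i hi
  have := Multiset.of_mem_filter hi
  omega

lemma phi2_eq (w : ℕ) (u : Fin m → Fin (L+1)) :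
    (phi w u).2 = Multiset.map (fun i => (w - (u i : ℕ)))
      ((Finset.univ : Finset (Fin m)).val.filter (fun i => (u i : ℕ) < w)) := by
  unfold phi
  dsimp only
  rw [Multiset.filter_map]
  rw [Multiset.filter_congr (q := fun i => (u i : ℕ) < w)
    (fun i _ => by simp only [Function.comp_apply]; omega)]
  apply Multiset.map_congr rfl
  intro i hi
  have := Multiset.of_mem_filter hi
  omega

lemma val_decomp (w : ℕ) (u : Fin m → Fin (L+1)) :
    (Finset.univ : Finset (Fin m)).val.map (fun i => ((u i : ℕ))) =
      (phi w u).1.map (fun x => w + x) + (phi w u).2.map (fun x => w - x) +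
      Multiset.replicate (m - Multiset.card (phi w u).1 - Multiset.card (phi w u).2) w := by
  classical
  set S := (Finset.univ : Finset (Fin m)).val with hS
  set A := S.filter (fun i => w < (u i : ℕ)) with hA
  set C := S.filter (fun i => (u i : ℕ) < w) with hC
  set B := S.filter (fun i => (u i : ℕ) = w) with hB
  have hsplit : S = A + (B + C) := by
    rw [hA]
    conv_lhs => rw [← Multiset.filter_add_not (fun i => w < (u i : ℕ)) S]
    congr 1
    rw [← Multiset.filter_add_not (fun i => (u i : ℕ) = w) (Multiset.filter _ S),
      Multiset.filter_filter, Multiset.filter_filter]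
    congr 1
    · exact Multiset.filter_congr (fun i _ => by constructor <;> intro h <;> omega)
    · exact Multiset.filter_congr (fun i _ => by constructor <;> intro h <;> omega)
  have h1 : Multiset.map (fun i => ((u i : ℕ))) A = (phi w u).1.map (fun x => w + x) := by
    rw [phi1_eq, Multiset.map_map]
    apply Multiset.map_congr rfl
    intro i hi
    have := Multiset.of_mem_filter hi
    simp only [Function.comp_apply]
    omega
  have h2 : Multiset.map (fun i => ((u i : ℕ))) C = (phi w u).2.map (fun x => w - x) := by
    rw [phi2_eq, Multiset.map_map]
    apply Multiset.map_congr rfl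
    intro i hi
    have := Multiset.of_mem_filter hi
    simp only [Function.comp_apply]
    omega
  have hcards : Multiset.card A + Multiset.card B + Multiset.card C = m := by
    have : Multiset.card S = m := by simp [hS]
    rw [hsplit] at this
    simp only [Multiset.card_add] at this
    omega
  have hcard1 : Multiset.card (phi w u).1 = Multiset.card A := by rw [phi1_eq, Multiset.card_map]
  have hcard2 : Multiset.card (phi w u).2 = Multiset.card C := by rw [phi2_eq, Multiset.card_map]
  have h3 : Multiset.map (fun i => ((u i : ℕ))) B =
      Multiset.replicate (m - Multiset.card (phi w u).1 - Multiset.card (phi w u).2) w := by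
    have hcB : Multiset.card (Multiset.map (fun i => ((u i : ℕ))) B) =
        m - Multiset.card (phi w u).1 - Multiset.card (phi w u).2 := by
      rw [Multiset.card_map, hcard1, hcard2]; omega
    rw [← hcB]
    rw [Multiset.eq_replicate_card]
    intro b hb
    obtain ⟨i, hi, rfl⟩ := Multiset.mem_map.mp hb
    rw [hB] at hi
    exact (Multiset.mem_filter.mp hi).2
  conv_lhs => rw [hsplit]
  rw [Multiset.map_add, Multiset.map_add, h1, h2, h3]
  ac_rfl

lemma val_list (u : Fin m → Fin (L+1)) :
    (Finset.univ : Finset (Fin m)).val.map (fun i => ((u i : ℕ))) =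
      ((List.ofFn fun i => ((u i : ℕ))) : List ℕ) := by
  simp [Fin.univ_def, List.ofFn_eq_map]

lemma phi_injOn (w : ℕ) (u v : Fin m → Fin (L+1))
    (hu : ∀ i j : Fin m, i ≤ j → (u j : ℕ) ≤ (u i : ℕ))
    (hv : ∀ i j : Fin m, i ≤ j → (v j : ℕ) ≤ (v i : ℕ))
    (h : phi w u = phi w v) : u = v := by
  have hval : (Finset.univ : Finset (Fin m)).val.map (fun i => ((u i : ℕ))) =
      (Finset.univ : Finset (Fin m)).val.map (fun i => ((v i : ℕ))) := by
    rw [val_decomp w u, val_decomp w v, h]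
  rw [val_list, val_list] at hval
  have hperm := Multiset.coe_eq_coe.mp hval
  have hsu : List.Pairwise (fun a b => b ≤ a) (List.ofFn fun i => ((u i : ℕ))) := by
    rw [List.pairwise_ofFn]
    exact fun i j hij => hu i j hij.le
  have hsv : List.Pairwise (fun a b => b ≤ a) (List.ofFn fun i => ((v i : ℕ))) := by
    rw [List.pairwise_ofFn]
    exact fun i j hij => hv i j hij.le
  have : (List.ofFn fun i => ((u i : ℕ))) = (List.ofFn fun i => ((v i : ℕ))) := by
    exact hperm.eq_of_pairwise (fun _ _ _ _ h1 h2 => le_antisymm h2 h1) hsu hsv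
  have := List.ofFn_inj.mp this
  funext i
  exact Fin.ext (congrFun this i)

lemma ofFn_get_cast {m : ℕ} (ls : List ℕ) (h : ls.length = m) :
    (List.ofFn fun i : Fin m => ls.get (Fin.cast h.symm i)) = ls := by
  subst h; simp

lemma ofFn_get_cast_map {m : ℕ} (ls : List ℕ) (h : ls.length = m) (F : ℕ → ℕ) :
    (List.ofFn fun i : Fin m => F (ls.get (Fin.cast h.symm i))) = ls.map F := by
  subst h
  conv_rhs => rw [← List.ofFn_get ls]
  rw [List.map_ofFn]
  rfl


lemma phi_surj (m L w t : ℕ) (hw : w ≤ L) (hm : t ≤ m) (htw : t ≤ w) (htLw : t ≤ L - w)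
    (l₁ l₂ : Multiset ℕ) (hp1 : ∀ x ∈ l₁, 0 < x) (hp2 : ∀ x ∈ l₂, 0 < x)
    (hsum : l₁.sum + l₂.sum ≤ t) :
    ∃ u : Fin m → Fin (L+1),
      (∀ i j : Fin m, i ≤ j → (u j : ℕ) ≤ (u i : ℕ)) ∧
      (∑ i, ((u i : ℤ) - (w : ℤ)).natAbs ≤ t) ∧ phi w u = (l₁, l₂) := by
  classical
  set a := Multiset.card l₁ with ha'
  set b := Multiset.card l₂ with hb'
  have ha : a ≤ l₁.sum := by simpa using Multiset.card_nsmul_le_sum hp1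
  have hb : b ≤ l₂.sum := by simpa using Multiset.card_nsmul_le_sum hp2
  have hab : a + b ≤ m := by omega
  -- sorted lists
  set L1 : List ℕ := (Multiset.sort l₁ (· ≤ ·)).reverse with hL1
  set L2 : List ℕ := Multiset.sort l₂ (· ≤ ·) with hL2
  have hL1mem : ∀ x, x ∈ L1 ↔ x ∈ l₁ := by
    intro x; rw [hL1, List.mem_reverse, Multiset.mem_sort]
  have hL2mem : ∀ x, x ∈ L2 ↔ x ∈ l₂ := by
    intro x; rw [hL2, Multiset.mem_sort]
  have hL1len : L1.length = a := by simp [hL1, ha']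
  have hL2len : L2.length = b := by simp [hL2, hb']
  have hL1coe : (L1 : Multiset ℕ) = l₁ := by
    rw [hL1, Multiset.coe_reverse]; exact Multiset.sort_eq _ _
  have hL2coe : (L2 : Multiset ℕ) = l₂ := Multiset.sort_eq _ _
  have hL1s : List.Pairwise (fun x y => y ≤ x) L1 :=
    List.pairwise_reverse.mpr (Multiset.pairwise_sort _ _)
  have hL2s : List.Pairwise (· ≤ ·) L2 := Multiset.pairwise_sort _ _
  have hL1bd : ∀ x ∈ L1, x ≤ t := fun x hx =>
    le_trans (Multiset.le_sum_of_mem ((hL1mem x).mp hx)) (by omega)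
  have hL2bd : ∀ y ∈ L2, y ≤ t := fun y hy =>
    le_trans (Multiset.le_sum_of_mem ((hL2mem y).mp hy)) (by omega)
  set ls : List ℕ :=
    L1.map (fun x => w + x) ++ (List.replicate (m - a - b) w ++ L2.map (fun y => w - y))
    with hls
  have hlen : ls.length = m := by
    simp [hls, hL1len, hL2len]; omega
  have hbd : ∀ x ∈ ls, x ≤ L := by
    intro x hx
    rw [hls] at hx
    simp only [List.mem_append, List.mem_map, List.mem_replicate] at hx
    rcases hx with ⟨z, hz, rfl⟩ | (⟨_, rfl⟩ | ⟨y, hy, rfl⟩)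
    · have := hL1bd z hz; omega
    · omega
    · omega
  refine ⟨fun i => ⟨ls.get (Fin.cast hlen.symm i), by
      have := hbd (ls.get (Fin.cast hlen.symm i)) (List.get_mem _ _); omega⟩, ?_, ?_, ?_⟩
  · -- monotone
    have hsort : List.Pairwise (fun x y => y ≤ x) ls := by
      rw [hls]
      refine List.pairwise_append.mpr ⟨?_, List.pairwise_append.mpr ⟨?_, ?_, ?_⟩, ?_⟩
      · exact hL1s.map _ (fun x y h => by omega)
      · exact (List.pairwise_replicate).mpr (Or.inr le_rfl)
      · exact hL2s.map _ (fun x y h => by omega)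
      · intro x hx y hy
        rw [List.mem_replicate] at hx
        obtain ⟨z, hz, rfl⟩ := List.mem_map.mp hy
        omega
      · intro x hx y hy
        obtain ⟨z, hz, rfl⟩ := List.mem_map.mp hx
        simp only [List.mem_append, List.mem_map, List.mem_replicate] at hy
        rcases hy with ⟨_, rfl⟩ | ⟨z', hz', rfl⟩ <;> omega
    intro i j hij
    rcases eq_or_lt_of_le hij with h | h
    · rw [h]
    · exact List.pairwise_iff_get.mp hsort _ _ (by exact h)
  · -- sum bound
    have hsum1 : l₁.sum = L1.sum := by rw [← hL1coe]; simp
    have hsum2 : l₂.sum = L2.sum := by rw [← hL2coe]; simp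
    have e1 : (∑ i : Fin m, ((((ls.get (Fin.cast hlen.symm i) : ℕ)) : ℤ) - (w : ℤ)).natAbs)
        = ((ls.map (fun x : ℕ => (((x : ℤ)) - (w : ℤ)).natAbs)).sum) := by
      rw [← List.sum_ofFn]
      congr 1
      exact ofFn_get_cast_map ls hlen (fun x : ℕ => ((x : ℤ) - (w : ℤ)).natAbs)
    show (∑ i : Fin m, ((((ls.get (Fin.cast hlen.symm i) : ℕ)) : ℤ) - (w : ℤ)).natAbs) ≤ t
    rw [e1, hls]
    rw [List.map_append, List.map_append, List.map_map, List.map_map, List.map_replicate,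
      List.sum_append, List.sum_append]
    have p1 : (L1.map ((fun x : ℕ => ((x : ℤ) - (w : ℤ)).natAbs) ∘ fun x => w + x)) = L1 := by
      conv_rhs => rw [← List.map_id L1]
      refine List.map_congr_left (fun x _ => ?_)
      simp only [Function.comp_apply, id_eq]
      omega
    have p2 : ((w : ℤ) - (w : ℤ)).natAbs = 0 := by omega
    have p3 : (L2.map ((fun x : ℕ => ((x : ℤ) - (w : ℤ)).natAbs) ∘ fun y => w - y)) = L2 := by
      conv_rhs => rw [← List.map_id L2]
      refine List.map_congr_left (fun y hy => ?_)
      have := hL2bd y hy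
      simp only [Function.comp_apply, id_eq]
      omega
    rw [p1, p2, p3]
    simp only [List.sum_replicate, smul_zero]
    omega
  · -- phi value
    set u : Fin m → Fin (L+1) := fun i => ⟨ls.get (Fin.cast hlen.symm i), by
      have := hbd (ls.get (Fin.cast hlen.symm i)) (List.get_mem _ _); omega⟩ with hu
    have hofn : (List.ofFn fun i => ((u i : ℕ))) = ls := ofFn_get_cast ls hlen
    have hval : (Finset.univ : Finset (Fin m)).val.map (fun i => ((u i : ℕ))) = (ls : Multiset ℕ) := by
      rw [val_list, hofn]
    have key1 : (Multiset.map (fun i => ((u i : ℤ) - (w : ℤ)).toNat)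
          (Finset.univ : Finset (Fin m)).val)
        = ((ls.map (fun x : ℕ => ((x : ℤ) - (w : ℤ)).toNat) : List ℕ) : Multiset ℕ) := by
      rw [show (fun i : Fin m => ((u i : ℤ) - (w : ℤ)).toNat)
            = (fun x : ℕ => ((x : ℤ) - (w : ℤ)).toNat) ∘ (fun i => ((u i : ℕ))) from rfl,
         ← Multiset.map_map, hval]
      simp
    have key2 : (Multiset.map (fun i => ((w : ℤ) - (u i : ℤ)).toNat)
          (Finset.univ : Finset (Fin m)).val)
        = ((ls.map (fun x : ℕ => ((w : ℤ) - (x : ℤ)).toNat) : List ℕ) : Multiset ℕ) := by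
      rw [show (fun i : Fin m => ((w : ℤ) - (u i : ℤ)).toNat)
            = (fun x : ℕ => ((w : ℤ) - (x : ℤ)).toNat) ∘ (fun i => ((u i : ℕ))) from rfl,
         ← Multiset.map_map, hval]
      simp
    unfold phi
    refine Prod.ext ?_ ?_ <;> dsimp only
    · rw [key1, hls]
      rw [List.map_append, List.map_append, List.map_map, List.map_map, List.map_replicate]
      have p1 : (L1.map ((fun x : ℕ => ((x : ℤ) - (w : ℤ)).toNat) ∘ fun x => w + x)) = L1 := by
        conv_rhs => rw [← List.map_id L1]
        refine List.map_congr_left (fun x _ => ?_)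
        simp only [Function.comp_apply, id_eq]
        omega
      have p2 : ((w : ℤ) - (w : ℤ)).toNat = 0 := by omega
      have p3 : (L2.map ((fun x : ℕ => ((x : ℤ) - (w : ℤ)).toNat) ∘ fun y => w - y)) =
          List.replicate L2.length 0 := by
        conv_rhs => rw [← List.map_const']
        refine List.map_congr_left (fun y hy => ?_)
        simp only [Function.comp_apply, Function.const_apply]
        omega
      rw [p1, p2, p3]
      rw [show ((L1 ++ (List.replicate (m - a - b) 0 ++ List.replicate L2.length 0) : List ℕ) : Multiset ℕ)
            = (L1 : Multiset ℕ) + ((List.replicate (m - a - b) 0 : List ℕ) : Multiset ℕ)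
              + ((List.replicate L2.length 0 : List ℕ) : Multiset ℕ) by
          rw [← Multiset.coe_add, ← Multiset.coe_add, add_assoc]]
      rw [Multiset.filter_add, Multiset.filter_add]
      rw [Multiset.filter_eq_self.mpr (fun x hx => hp1 x (by rwa [← hL1coe]))]
      rw [Multiset.filter_eq_nil.mpr (fun x hx => by
        rw [Multiset.mem_coe, List.mem_replicate] at hx; omega)]
      rw [Multiset.filter_eq_nil.mpr (fun x hx => by
        rw [Multiset.mem_coe, List.mem_replicate] at hx; omega)]
      rw [hL1coe]; simp
    · rw [key2, hls]
      rw [List.map_append, List.map_append, List.map_map, List.map_map, List.map_replicate]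
      have p1 : (L1.map ((fun x : ℕ => ((w : ℤ) - (x : ℤ)).toNat) ∘ fun x => w + x)) =
          List.replicate L1.length 0 := by
        conv_rhs => rw [← List.map_const']
        refine List.map_congr_left (fun x _ => ?_)
        simp only [Function.comp_apply, Function.const_apply]
        omega
      have p2 : ((w : ℤ) - (w : ℤ)).toNat = 0 := by omega
      have p3 : (L2.map ((fun x : ℕ => ((w : ℤ) - (x : ℤ)).toNat) ∘ fun y => w - y)) = L2 := by
        conv_rhs => rw [← List.map_id L2]
        refine List.map_congr_left (fun y hy => ?_)
        have hyw : y ≤ w := le_trans (hL2bd y hy) htw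
        simp only [Function.comp_apply, id_eq]
        omega
      rw [p1, p2, p3]
      rw [show ((List.replicate L1.length 0 ++ (List.replicate (m - a - b) 0 ++ L2) : List ℕ) : Multiset ℕ)
            = ((List.replicate L1.length 0 : List ℕ) : Multiset ℕ)
              + ((List.replicate (m - a - b) 0 : List ℕ) : Multiset ℕ) + (L2 : Multiset ℕ) by
          rw [← Multiset.coe_add, ← Multiset.coe_add, add_assoc]]
      rw [Multiset.filter_add, Multiset.filter_add]
      rw [Multiset.filter_eq_nil.mpr (fun x hx => by
        rw [Multiset.mem_coe, List.mem_replicate] at hx; omega)]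
      rw [Multiset.filter_eq_nil.mpr (fun x hx => by
        rw [Multiset.mem_coe, List.mem_replicate] at hx; omega)]
      rw [Multiset.filter_eq_self.mpr (fun x hx => hp2 x (by rwa [← hL2coe]))]
      rw [hL2coe]; simp

end AuxLemmas

/-- Lemma 12 (bijectivity): if `m ≥ t` and `t ≤ min{w, L-w}`, then `φ` is a
bijection from `P(m,L;w,t)` onto the set of pairs of partitions with total
weight at most `t`. -/
theorem stmt_5 (m L w t : ℕ) (hw : w ≤ L) (hm : t ≤ m)
    (htw : t ≤ w) (htLw : t ≤ L - w) :
    Set.BijOn (phi w)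
      ((Pset m L w t : Finset (Fin m → Fin (L + 1))) : Set (Fin m → Fin (L + 1)))
      {p : Multiset ℕ × Multiset ℕ |
        (∀ x ∈ p.1, 0 < x) ∧ (∀ x ∈ p.2, 0 < x) ∧ p.1.sum + p.2.sum ≤ t} := by
  refine ⟨?_, ?_, ?_⟩
  · -- MapsTo
    intro u hu
    simp only [Finset.mem_coe, Pset, Finset.mem_filter] at hu
    obtain ⟨-, hmono, hsumu⟩ := hu
    refine ⟨fun x hx => ?_, fun x hx => ?_, ?_⟩
    · rw [phi1_eq] at hx
      obtain ⟨i, hi, rfl⟩ := Multiset.mem_map.mp hx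
      have := Multiset.of_mem_filter hi
      omega
    · rw [phi2_eq] at hx
      obtain ⟨i, hi, rfl⟩ := Multiset.mem_map.mp hx
      have := Multiset.of_mem_filter hi
      omega
    have e1 : (phi w u).1.sum
        = ∑ i ∈ Finset.univ.filter (fun i => w < (u i : ℕ)), ((u i : ℕ) - w) := by
      rw [phi1_eq, Finset.sum, Finset.filter_val]
    have e2 : (phi w u).2.sum
        = ∑ i ∈ Finset.univ.filter (fun i => (u i : ℕ) < w), (w - (u i : ℕ)) := by
      rw [phi2_eq, Finset.sum, Finset.filter_val]
    rw [e1, e2, Finset.sum_filter, Finset.sum_filter]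
    calc (∑ i : Fin m, if w < (u i : ℕ) then (u i : ℕ) - w else 0)
          + ∑ i : Fin m, (if (u i : ℕ) < w then w - (u i : ℕ) else 0)
        = ∑ i : Fin m, ((u i : ℤ) - (w : ℤ)).natAbs := by
          rw [← Finset.sum_add_distrib]
          refine Finset.sum_congr rfl (fun i _ => ?_)
          split_ifs <;> omega
      _ ≤ t := hsumu
  · -- InjOn
    intro u hu v hv h
    simp only [Finset.mem_coe, Pset, Finset.mem_filter] at hu hv
    exact phi_injOn w u v hu.2.1 hv.2.1 h
  · -- SurjOn
    intro p hp
    obtain ⟨h1, h2, h3⟩ := hp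
    obtain ⟨u, hmono, hsum', hphi⟩ := phi_surj m L w t hw hm htw htLw p.1 p.2 h1 h2 h3
    refine ⟨u, ?_, ?_⟩
    · simp only [Finset.mem_coe, Pset, Finset.mem_filter]
      exact ⟨Finset.mem_univ u, hmono, hsum'⟩
    · rw [hphi]
end

section
/- Let C(m,L,w) ⊆ {0,1}^{mL} be the set of words whose every length-L subblock has Hamming weight exactly w, with 1 ≤ w ≤ L−1. Any code C ⊆ C(m,L,w) with minimum Hamming distance at least 4 satisfies |C| ≤ C(L,w−1)·C(L,w)^{m−1}/w if w ≤ L/2, and |C| ≤ C(L,w+1)·C(L,w)^{m−1}/(L−w) if w > L/2. -/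
open Finset

/-- The Hamming weight of a length-`L` binary subblock. -/
def wt {L : ℕ} (b : Fin L → Bool) : ℕ :=
  (Finset.univ.filter (fun j => b j = true)).card

/-- Hamming distance between two binary words of length `mL`, given as `m`
subblocks of length `L`. -/
def hdist {m L : ℕ} (x y : Fin m → Fin L → Bool) : ℕ :=
  ∑ i, hammingDist (x i) (y i)

lemma choose_mono_half (L : ℕ) : ∀ b a, a ≤ b → 2 * b ≤ L → Nat.choose L a ≤ Nat.choose L b := by
  intro b
  induction b with
  | zero => intro a ha _; interval_cases a; rfl
  | succ n ih =>
    intro a ha hb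
    rcases Nat.eq_or_lt_of_le ha with h | h
    · subst h; rfl
    · have h1 : a ≤ n := by omega
      calc Nat.choose L a ≤ Nat.choose L n := ih a h1 (by omega)
        _ ≤ Nat.choose L (n + 1) :=
          Nat.choose_le_succ_of_lt_half_left (by omega)

lemma card_wt (L k : ℕ) :
    (univ.filter (fun b : Fin L → Bool => wt b = k)).card = Nat.choose L k := by
  have h : (univ.filter (fun b : Fin L → Bool => wt b = k)).card
      = (Finset.powersetCard k (univ : Finset (Fin L))).card := by
    apply Finset.card_bij (fun b _ => univ.filter (fun j => b j = true))
    · intro b hb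
      simp only [Finset.mem_powersetCard]
      exact ⟨Finset.filter_subset _ _, (Finset.mem_filter.mp hb).2⟩
    · intro a ha b hb h
      funext j
      have := Finset.ext_iff.mp h j
      simp only [Finset.mem_filter, Finset.mem_univ, true_and] at this
      cases hbj : b j <;> cases haj : a j <;> simp_all
    · intro s hs
      refine ⟨fun j => decide (j ∈ s), ?_, ?_⟩
      · rw [Finset.mem_filter]; simp only [Finset.mem_univ, true_and, wt]
        rw [Finset.mem_powersetCard] at hs
        have : (univ.filter (fun j => decide (j ∈ s) = true)) = s := by
          ext j; simp
        rw [this]; exact hs.2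
      · ext j; simp
  rw [h, Finset.card_powersetCard, Finset.card_univ, Fintype.card_fin]

lemma wt_update_false {L : ℕ} (a : Fin L → Bool) (j : Fin L) (h : a j = true) :
    wt (Function.update a j false) = wt a - 1 := by
  unfold wt
  have he : univ.filter (fun i => Function.update a j false i = true)
      = (univ.filter (fun i => a i = true)).erase j := by
    ext i
    simp only [Finset.mem_filter, Finset.mem_univ, true_and, Finset.mem_erase]
    rcases eq_or_ne i j with rfl | hne
    · simp [Function.update_self]
    · simp [Function.update_of_ne hne, hne]
  rw [he, Finset.card_erase_of_mem (by simp [h])]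

lemma wt_update_true {L : ℕ} (a : Fin L → Bool) (j : Fin L) (h : a j = false) :
    wt (Function.update a j true) = wt a + 1 := by
  unfold wt
  have he : univ.filter (fun i => Function.update a j true i = true)
      = insert j (univ.filter (fun i => a i = true)) := by
    ext i
    simp only [Finset.mem_filter, Finset.mem_univ, true_and, Finset.mem_insert]
    rcases eq_or_ne i j with rfl | hne
    · simp [Function.update_self]
    · simp [Function.update_of_ne hne, hne]
  rw [he, Finset.card_insert_of_notMem (by simp [h])]

lemma card_target (m L w w' : ℕ) (i0 : Fin m) :
    (univ.filter (fun x : Fin m → Fin L → Bool =>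
        ∀ i, wt (x i) = if i = i0 then w' else w)).card
      = Nat.choose L w' * Nat.choose L w ^ (m - 1) := by
  classical
  have h1 : (univ.filter (fun x : Fin m → Fin L → Bool =>
        ∀ i, wt (x i) = if i = i0 then w' else w)).card
      = Fintype.card {x : Fin m → Fin L → Bool // ∀ i, wt (x i) = if i = i0 then w' else w} :=
    (Fintype.card_subtype _).symm
  rw [h1, Fintype.card_congr (Equiv.subtypePiEquivPi
      (p := fun (i : Fin m) (b : Fin L → Bool) => wt b = if i = i0 then w' else w)),
    Fintype.card_pi]
  have h2 : ∀ i : Fin m, Fintype.card {b : Fin L → Bool // wt b = if i = i0 then w' else w}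
      = Nat.choose L (if i = i0 then w' else w) := by
    intro i
    rw [Fintype.card_subtype, card_wt]
  rw [Finset.prod_congr rfl (fun i _ => h2 i)]
  rw [← Finset.mul_prod_erase univ _ (Finset.mem_univ i0), if_pos rfl]
  congr 1
  rw [Finset.prod_congr rfl (fun i hi =>
      by rw [if_neg (Finset.mem_erase.mp hi).1] : ∀ i ∈ univ.erase i0,
        Nat.choose L (if i = i0 then w' else w) = Nat.choose L w),
    Finset.prod_const, Finset.card_erase_of_mem (Finset.mem_univ i0),
    Finset.card_univ, Fintype.card_fin]

lemma key (m L w w' d : ℕ) (hm : 0 < m) (b : Bool)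
    (C : Finset (Fin m → Fin L → Bool))
    (hC : ∀ c ∈ C, ∀ i, wt (c i) = w)
    (hmin : ∀ x ∈ C, ∀ y ∈ C, x ≠ y → 4 ≤ hdist x y)
    (hd : ∀ c ∈ C, (univ.filter fun j => c ⟨0, hm⟩ j = b).card = d)
    (hw' : ∀ c ∈ C, ∀ j, c ⟨0, hm⟩ j = b →
        wt (Function.update (c ⟨0, hm⟩) j (!b)) = w') :
    C.card * d ≤ Nat.choose L w' * Nat.choose L w ^ (m - 1) := by
  classical
  set i0 : Fin m := ⟨0, hm⟩
  set S : Finset ((Σ _ : Fin m → Fin L → Bool, Fin L)) :=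
    C.sigma (fun c => univ.filter fun j => c i0 j = b) with hS
  have hcardS : S.card = C.card * d := by
    rw [hS, Finset.card_sigma, Finset.sum_congr rfl (fun c hc => hd c hc),
      Finset.sum_const, smul_eq_mul]
  rw [← hcardS, ← card_target m L w w' i0]
  set Φ : (Σ _ : Fin m → Fin L → Bool, Fin L) → (Fin m → Fin L → Bool) :=
    fun p => Function.update p.1 i0 (Function.update (p.1 i0) p.2 (!b)) with hΦ
  apply Finset.card_le_card_of_injOn Φ
  · rintro ⟨c, j⟩ hp
    rw [hS, Finset.mem_coe, Finset.mem_sigma, Finset.mem_filter] at hp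
    obtain ⟨hcC, -, hcj⟩ := hp
    simp only [Finset.mem_coe, Finset.mem_filter, Finset.mem_univ, true_and]
    intro i
    rcases eq_or_ne i i0 with rfl | hne
    · simp only [hΦ, Function.update_self, if_pos rfl]
      exact hw' c hcC j hcj
    · simp only [hΦ, Function.update_of_ne hne, if_neg hne]
      exact hC c hcC i
  · rintro ⟨c, j⟩ hp ⟨c', j'⟩ hq heq
    simp only [Finset.coe_sigma, Set.mem_sigma_iff, Finset.mem_coe, Finset.mem_filter,
      Finset.mem_univ, true_and, hS] at hp hq
    obtain ⟨hcC, hcj⟩ := hp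
    obtain ⟨hc'C, hc'j⟩ := hq
    simp only [hΦ] at heq
    have hblocks : ∀ i, i ≠ i0 → c i = c' i := by
      intro i hne
      have := congrFun heq i
      rwa [Function.update_of_ne hne, Function.update_of_ne hne] at this
    have hupd : Function.update (c i0) j (!b) = Function.update (c' i0) j' (!b) := by
      have := congrFun heq i0
      rwa [Function.update_self, Function.update_self] at this
    have hcc' : c = c' := by
      by_contra hne
      have h4 := hmin c hcC c' hc'C hne
      have hle2 : hdist c c' ≤ 2 := by
        have hsum : hdist c c' = hammingDist (c i0) (c' i0) := by
          unfold hdist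
          rw [Finset.sum_eq_single i0]
          · intro i _ hne'
            exact hammingDist_eq_zero.mpr (hblocks i hne')
          · intro h; exact absurd (Finset.mem_univ i0) h
        rw [hsum]
        have hsub : (univ.filter fun k => c i0 k ≠ c' i0 k) ⊆ {j, j'} := by
          intro k hk
          simp only [Finset.mem_filter, Finset.mem_univ, true_and] at hk
          simp only [Finset.mem_insert, Finset.mem_singleton]
          by_contra hkk
          push_neg at hkk
          have := congrFun hupd k
          rw [Function.update_of_ne hkk.1, Function.update_of_ne hkk.2] at this
          exact hk this
        calc hammingDist (c i0) (c' i0)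
            = (univ.filter fun k => c i0 k ≠ c' i0 k).card := rfl
          _ ≤ ({j, j'} : Finset (Fin L)).card := Finset.card_le_card hsub
          _ ≤ 2 := Finset.card_insert_le _ _ |>.trans (by simp)
      omega
    subst hcc'
    have hjj' : j = j' := by
      by_contra hne
      have := congrFun hupd j
      rw [Function.update_self, Function.update_of_ne hne] at this
      rw [hcj] at this
      cases b <;> simp_all
    subst hjj'
    rfl

/-- Corollary 8(i): generalized sphere-packing bound for single-error
correcting constant subblock-composition codes. -/
theorem stmt_10 (m L w : ℕ) (hw1 : 1 ≤ w) (hw2 : w ≤ L - 1)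
    (C : Finset (Fin m → Fin L → Bool))
    (hC : ∀ c ∈ C, ∀ i, wt (c i) = w)
    (hmin : ∀ x ∈ C, ∀ y ∈ C, x ≠ y → 4 ≤ hdist x y) :
    (2 * w ≤ L →
      (C.card : ℚ) ≤ (Nat.choose L (w - 1) * Nat.choose L w ^ (m - 1) : ℚ) / (w : ℚ)) ∧
    (L < 2 * w →
      (C.card : ℚ) ≤ (Nat.choose L (w + 1) * Nat.choose L w ^ (m - 1) : ℚ) / ((L - w : ℕ) : ℚ)) := by
  have hL2 : 2 ≤ L := by omega
  have hcard1 : m = 0 → C.card ≤ 1 := by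
    intro hm
    subst hm
    calc C.card ≤ Fintype.card (Fin 0 → Fin L → Bool) := Finset.card_le_univ C
      _ = 1 := by simp
  constructor
  · -- case 2w ≤ L
    intro hle
    have hWle : w ≤ Nat.choose L (w - 1) := by
      rcases Nat.eq_or_lt_of_le hw1 with h | h
      · simp [← h]
      · calc w ≤ L := by omega
          _ = Nat.choose L 1 := (Nat.choose_one_right L).symm
          _ ≤ Nat.choose L (w - 1) := choose_mono_half L (w - 1) 1 (by omega) (by omega)
    have key1 : C.card * w ≤ Nat.choose L (w - 1) * Nat.choose L w ^ (m - 1) := by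
      rcases Nat.eq_zero_or_pos m with hm | hm
      · subst hm
        simp only [Nat.zero_sub, pow_zero, mul_one]
        calc C.card * w ≤ 1 * w := Nat.mul_le_mul_right _ (hcard1 rfl)
          _ = w := one_mul w
          _ ≤ _ := hWle
      · apply key m L w (w - 1) w hm true C hC hmin
        · intro c hc
          exact hC c hc ⟨0, hm⟩
        · intro c hc j hj
          simp only [Bool.not_true]
          rw [wt_update_false _ _ hj, hC c hc]
    have hwpos : (0 : ℚ) < (w : ℚ) := by exact_mod_cast hw1
    rw [le_div_iff₀ hwpos]
    exact_mod_cast key1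
  · -- case L < 2w
    intro hlt
    have hWle2 : L - w ≤ Nat.choose L (w + 1) := by
      rw [← Nat.choose_symm (show w + 1 ≤ L by omega)]
      rcases Nat.eq_zero_or_pos (L - (w + 1)) with h | h
      · rw [h, Nat.choose_zero_right]; omega
      · calc L - w ≤ L := Nat.sub_le _ _
          _ = Nat.choose L 1 := (Nat.choose_one_right L).symm
          _ ≤ _ := choose_mono_half L (L - (w + 1)) 1 h (by omega)
    have key2 : C.card * (L - w) ≤ Nat.choose L (w + 1) * Nat.choose L w ^ (m - 1) := by
      rcases Nat.eq_zero_or_pos m with hm | hm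
      · subst hm
        simp only [Nat.zero_sub, pow_zero, mul_one]
        calc C.card * (L - w) ≤ 1 * (L - w) := Nat.mul_le_mul_right _ (hcard1 rfl)
          _ = L - w := one_mul _
          _ ≤ _ := hWle2
      · apply key m L w (w + 1) (L - w) hm false C hC hmin
        · intro c hc
          have hcompl : (univ.filter fun j => c ⟨0, hm⟩ j = false)
              = (univ.filter fun j => c ⟨0, hm⟩ j = true)ᶜ := by
            ext j
            simp [Finset.mem_compl]
          rw [hcompl, Finset.card_compl, Fintype.card_fin]
          have := hC c hc ⟨0, hm⟩
          unfold wt at this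
          rw [this]
        · intro c hc j hj
          simp only [Bool.not_false]
          rw [wt_update_true _ _ hj, hC c hc]
    have hwpos : (0 : ℚ) < ((L - w : ℕ) : ℚ) := by
      have : 1 ≤ L - w := by omega
      exact_mod_cast this
    rw [le_div_iff₀ hwpos]
    exact_mod_cast key2
end

section
/- Fix x ∈ C(m,L,w) with L ≥ w+2 and integers t ≥ m and t̃ = ⌊(t−m)/2⌋ ≥ 0. The number of words y ∈ C(m,L,w+1) such that exactly t̃ subblocks of y differ from the corresponding subblocks of x in exactly three positions and the remaining m−t̃ subblocks differ in exactly one position equals C(m,t̃)·[C(L−w,2)·w]^{t̃}·(L−w)^{m−t̃}, and every such y satisfies Hamming distance τ(x,y) = 3t̃ + (m−t̃) ≤ t. -/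
open Finset

lemma wt_rel {L : ℕ} (b c : Fin L → Bool) :
    wt c + (Finset.univ.filter (fun j => b j = true ∧ c j = false)).card
      = wt b + (Finset.univ.filter (fun j => b j = false ∧ c j = true)).card := by
  simp only [wt, Finset.card_filter]
  rw [← Finset.sum_add_distrib, ← Finset.sum_add_distrib]
  apply Finset.sum_congr rfl
  intro j _
  cases hb : b j <;> cases hc : c j <;> simp

lemma dist_rel {L : ℕ} (b c : Fin L → Bool) :
    hammingDist b c = (Finset.univ.filter (fun j => b j = true ∧ c j = false)).card
      + (Finset.univ.filter (fun j => b j = false ∧ c j = true)).card := by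
  rw [hammingDist, Finset.card_filter, Finset.card_filter, Finset.card_filter,
    ← Finset.sum_add_distrib]
  apply Finset.sum_congr rfl
  intro j _
  cases hb : b j <;> cases hc : c j <;> simp

lemma count_flip {L : ℕ} (b : Fin L → Bool) (p q : ℕ) :
    (Finset.univ.filter (fun c : Fin L → Bool =>
      (Finset.univ.filter (fun j => b j = true ∧ c j = false)).card = p ∧
      (Finset.univ.filter (fun j => b j = false ∧ c j = true)).card = q)).card
    = (wt b).choose p * (L - wt b).choose q := by
  classical
  set O : Finset (Fin L) := Finset.univ.filter (fun j => b j = true) with hO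
  set Z : Finset (Fin L) := Finset.univ.filter (fun j => b j = false) with hZ
  have hcard : (O.powersetCard p ×ˢ Z.powersetCard q).card
      = (wt b).choose p * (L - wt b).choose q := by
    rw [Finset.card_product, Finset.card_powersetCard, Finset.card_powersetCard]
    congr 2
    · rw [hZ]
      have : Z = Finset.univ \ O := by
        ext j; simp [hO, hZ]
      rw [← hZ, this, Finset.card_sdiff_of_subset (Finset.subset_univ O)]
      simp [wt, hO]
  rw [← hcard]
  apply Finset.card_bij'
    (i := fun c _ => (Finset.univ.filter (fun j => b j = true ∧ c j = false),
      Finset.univ.filter (fun j => b j = false ∧ c j = true)))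
    (j := fun PQ _ => fun j => if j ∈ PQ.1 then false else if j ∈ PQ.2 then true else b j)
  · intro c hc
    simp only [Finset.mem_filter, Finset.mem_univ, true_and] at hc
    simp only [Finset.mem_product, Finset.mem_powersetCard]
    refine ⟨⟨?_, hc.1⟩, ?_, hc.2⟩
    · intro j hj
      rw [Finset.mem_filter] at hj
      rw [hO, Finset.mem_filter]
      exact ⟨Finset.mem_univ j, hj.2.1⟩
    · intro j hj
      rw [Finset.mem_filter] at hj
      rw [hZ, Finset.mem_filter]
      exact ⟨Finset.mem_univ j, hj.2.1⟩
  · intro PQ hPQ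
    obtain ⟨P, Q⟩ := PQ
    simp only [Finset.mem_product, Finset.mem_powersetCard] at hPQ
    obtain ⟨⟨hPs, hPc⟩, hQs, hQc⟩ := hPQ
    simp only [Finset.mem_filter, Finset.mem_univ, true_and]
    constructor
    · rw [← hPc]; congr 1
      ext j
      simp only [Finset.mem_filter, Finset.mem_univ, true_and]
      constructor
      · rintro ⟨hbj, hcj⟩
        by_cases hP : j ∈ P
        · exact hP
        · exfalso
          by_cases hQ : j ∈ Q
          · have := hQs hQ; simp [hZ] at this; simp [this] at hbj
          · simp [hP, hQ, hbj] at hcj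
      · intro hP
        have := hPs hP; simp [hO] at this
        simp [hP, this]
    · rw [← hQc]; congr 1
      ext j
      simp only [Finset.mem_filter, Finset.mem_univ, true_and]
      constructor
      · rintro ⟨hbj, hcj⟩
        by_cases hP : j ∈ P
        · have := hPs hP; simp [hO] at this; simp [this] at hbj
        · by_cases hQ : j ∈ Q
          · exact hQ
          · simp [hP, hQ, hbj] at hcj
      · intro hQ
        have hbj := hQs hQ; simp [hZ] at hbj
        have hP : j ∉ P := by
          intro hP; have := hPs hP; simp [hO] at this; simp [this] at hbj
        simp [hP, hQ, hbj]
  · intro c hc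
    funext j
    simp only [Finset.mem_filter, Finset.mem_univ, true_and]
    by_cases h1 : b j = true ∧ c j = false
    · simp [h1, h1.2]
    · by_cases h2 : b j = false ∧ c j = true
      · simp [h1, h2, h2.2]
      · simp only [h1, h2, if_false]
        cases hbj : b j <;> cases hcj : c j <;> simp_all
  · intro PQ hPQ
    obtain ⟨P, Q⟩ := PQ
    simp only [Finset.mem_product, Finset.mem_powersetCard] at hPQ
    obtain ⟨⟨hPs, hPc⟩, hQs, hQc⟩ := hPQ
    have hPQdisj : ∀ j, j ∈ P → j ∉ Q := by
      intro j hP hQ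
      have h1 := hPs hP; have h2 := hQs hQ
      simp [hO] at h1; simp [hZ] at h2; simp [h1] at h2
    simp only [Prod.mk.injEq]
    constructor
    · ext j
      simp only [Finset.mem_filter, Finset.mem_univ, true_and]
      constructor
      · rintro ⟨hbj, hcj⟩
        by_cases hP : j ∈ P
        · exact hP
        · by_cases hQ : j ∈ Q <;> simp [hP, hQ, hbj] at hcj
      · intro hP
        have hbj := hPs hP; simp [hO] at hbj
        simp [hP, hbj]
    · ext j
      simp only [Finset.mem_filter, Finset.mem_univ, true_and]
      constructor
      · rintro ⟨hbj, hcj⟩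
        by_cases hP : j ∈ P
        · have := hPs hP; simp [hO] at this; simp [this] at hbj
        · by_cases hQ : j ∈ Q
          · exact hQ
          · simp [hP, hQ, hbj] at hcj
      · intro hQ
        have hbj := hQs hQ; simp [hZ] at hbj
        simp [hPQdisj, fun h => hPQdisj j h hQ, hQ, hbj]
        intro hP; exact absurd hQ (hPQdisj j hP)

lemma blockA {L w : ℕ} (b : Fin L → Bool) (hb : wt b = w) :
    (Finset.univ.filter (fun c : Fin L → Bool =>
      wt c = w + 1 ∧ hammingDist b c = 3)).card = Nat.choose (L - w) 2 * w := by
  have he : (Finset.univ.filter (fun c : Fin L → Bool =>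
      wt c = w + 1 ∧ hammingDist b c = 3)) =
      (Finset.univ.filter (fun c : Fin L → Bool =>
        (Finset.univ.filter (fun j => b j = true ∧ c j = false)).card = 1 ∧
        (Finset.univ.filter (fun j => b j = false ∧ c j = true)).card = 2)) := by
    apply Finset.filter_congr
    intro c _
    have h1 := wt_rel b c
    have h2 := dist_rel b c
    rw [hb] at h1
    constructor
    · rintro ⟨hw, hd⟩; rw [hw] at h1; rw [hd] at h2; omega
    · rintro ⟨hp, hq⟩; rw [hp, hq] at h1 h2; omega
  rw [he, count_flip, hb, Nat.choose_one_right, Nat.mul_comm]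

lemma blockB {L w : ℕ} (b : Fin L → Bool) (hb : wt b = w) :
    (Finset.univ.filter (fun c : Fin L → Bool =>
      wt c = w + 1 ∧ hammingDist b c = 1)).card = L - w := by
  have he : (Finset.univ.filter (fun c : Fin L → Bool =>
      wt c = w + 1 ∧ hammingDist b c = 1)) =
      (Finset.univ.filter (fun c : Fin L → Bool =>
        (Finset.univ.filter (fun j => b j = true ∧ c j = false)).card = 0 ∧
        (Finset.univ.filter (fun j => b j = false ∧ c j = true)).card = 1)) := by
    apply Finset.filter_congr
    intro c _
    have h1 := wt_rel b c
    have h2 := dist_rel b c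
    rw [hb] at h1
    constructor
    · rintro ⟨hw, hd⟩; rw [hw] at h1; rw [hd] at h2; omega
    · rintro ⟨hp, hq⟩; rw [hp, hq] at h1 h2; omega
  rw [he, count_flip, hb, Nat.choose_zero_right, Nat.choose_one_right, Nat.one_mul]

/-- The counting step in Proposition 9: for `x ∈ C(m,L,w)` with `L ≥ w+2`,
`t ≥ m` and `t̃ = ⌊(t-m)/2⌋`, the number of `y ∈ C(m,L,w+1)` with exactly `t̃`
subblocks differing from `x` in exactly three positions and the remaining
`m - t̃` differing in exactly one position is
`C(m,t̃)·[C(L-w,2)·w]^t̃·(L-w)^{m-t̃}`, and each such `y` is at Hamming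
distance `3t̃ + (m - t̃) ≤ t` from `x`. -/
theorem stmt_12 (m L w t : ℕ) (hL : w + 2 ≤ L) (ht : m ≤ t)
    (x : Fin m → Fin L → Bool) (hx : ∀ i, wt (x i) = w) :
    (Finset.univ.filter (fun y : Fin m → Fin L → Bool =>
      (∀ i, wt (y i) = w + 1) ∧
      (Finset.univ.filter (fun i : Fin m => hammingDist (x i) (y i) = 3)).card = (t - m) / 2 ∧
      ∀ i, hammingDist (x i) (y i) = 3 ∨ hammingDist (x i) (y i) = 1)).card =
      Nat.choose m ((t - m) / 2) * (Nat.choose (L - w) 2 * w) ^ ((t - m) / 2) *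
        (L - w) ^ (m - (t - m) / 2) ∧
    ∀ y : Fin m → Fin L → Bool,
      ((∀ i, wt (y i) = w + 1) ∧
        (Finset.univ.filter (fun i : Fin m => hammingDist (x i) (y i) = 3)).card = (t - m) / 2 ∧
        ∀ i, hammingDist (x i) (y i) = 3 ∨ hammingDist (x i) (y i) = 1) →
      hdist x y = 3 * ((t - m) / 2) + (m - (t - m) / 2) ∧
        3 * ((t - m) / 2) + (m - (t - m) / 2) ≤ t := by
  classical
  set t' := (t - m) / 2 with ht'
  set A : Fin m → Finset (Fin L → Bool) := fun i =>
    Finset.univ.filter (fun c => wt c = w + 1 ∧ hammingDist (x i) c = 3) with hA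
  set B : Fin m → Finset (Fin L → Bool) := fun i =>
    Finset.univ.filter (fun c => wt c = w + 1 ∧ hammingDist (x i) c = 1) with hB
  constructor
  · have hset : (Finset.univ.filter (fun y : Fin m → Fin L → Bool =>
        (∀ i, wt (y i) = w + 1) ∧
        (Finset.univ.filter (fun i : Fin m => hammingDist (x i) (y i) = 3)).card = t' ∧
        ∀ i, hammingDist (x i) (y i) = 3 ∨ hammingDist (x i) (y i) = 1)) =
        (Finset.univ.powersetCard t').biUnion (fun S =>
          Fintype.piFinset (fun i => if i ∈ S then A i else B i)) := by
      ext y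
      simp only [Finset.mem_filter, Finset.mem_univ, true_and, Finset.mem_biUnion,
        Finset.mem_powersetCard, Fintype.mem_piFinset]
      constructor
      · rintro ⟨hw, hc, hd⟩
        refine ⟨Finset.univ.filter (fun i => hammingDist (x i) (y i) = 3),
          ⟨Finset.subset_univ _, hc⟩, ?_⟩
        intro i
        by_cases h3 : hammingDist (x i) (y i) = 3
        · simp [Finset.mem_filter, h3, hA, hw i]
        · have h1 : hammingDist (x i) (y i) = 1 := (hd i).resolve_left h3
          simp [Finset.mem_filter, h3, hB, hw i, h1]
      · rintro ⟨S, ⟨_, hSc⟩, hy⟩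
        have key : ∀ i, (i ∈ S → wt (y i) = w + 1 ∧ hammingDist (x i) (y i) = 3) ∧
            (i ∉ S → wt (y i) = w + 1 ∧ hammingDist (x i) (y i) = 1) := by
          intro i
          constructor
          · intro hi; have h := hy i; rw [if_pos hi, hA] at h
            simpa using h
          · intro hi; have h := hy i; rw [if_neg hi, hB] at h
            simpa using h
        have hSeq : Finset.univ.filter (fun i => hammingDist (x i) (y i) = 3) = S := by
          ext i
          simp only [Finset.mem_filter, Finset.mem_univ, true_and]
          constructor
          · intro h3
            by_contra hi
            have := (key i).2 hi
            omega
          · intro hi; exact ((key i).1 hi).2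
        refine ⟨?_, by rw [hSeq]; exact hSc, ?_⟩
        · intro i
          by_cases hi : i ∈ S
          · exact ((key i).1 hi).1
          · exact ((key i).2 hi).1
        · intro i
          by_cases hi : i ∈ S
          · exact Or.inl ((key i).1 hi).2
          · exact Or.inr ((key i).2 hi).2
    rw [hset, Finset.card_biUnion]
    · have hpiece : ∀ S ∈ Finset.univ.powersetCard t',
          (Fintype.piFinset (fun i => if i ∈ S then A i else B i)).card
          = (Nat.choose (L - w) 2 * w) ^ t' * (L - w) ^ (m - t') := by
        intro S hS
        rw [Finset.mem_powersetCard] at hS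
        rw [Fintype.card_piFinset]
        have : ∀ i : Fin m, (if i ∈ S then A i else B i).card
            = if i ∈ S then Nat.choose (L - w) 2 * w else L - w := by
          intro i
          by_cases hi : i ∈ S
          · rw [if_pos hi, if_pos hi, hA]; exact blockA (x i) (hx i)
          · rw [if_neg hi, if_neg hi, hB]; exact blockB (x i) (hx i)
        rw [Finset.prod_congr rfl (fun i _ => this i)]
        rw [← Finset.prod_sdiff (Finset.subset_univ S)]
        have h1 : ∏ i ∈ Finset.univ \ S, (if i ∈ S then Nat.choose (L - w) 2 * w else L - w)
            = (L - w) ^ (m - t') := by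
          rw [Finset.prod_congr rfl (fun i hi => if_neg (Finset.mem_sdiff.mp hi).2),
            Finset.prod_const, Finset.card_sdiff_of_subset (Finset.subset_univ S), hS.2]
          simp
        have h2 : ∏ i ∈ S, (if i ∈ S then Nat.choose (L - w) 2 * w else L - w)
            = (Nat.choose (L - w) 2 * w) ^ t' := by
          rw [Finset.prod_congr rfl (fun i hi => if_pos hi), Finset.prod_const, hS.2]
        rw [h1, h2, Nat.mul_comm]
      rw [Finset.sum_congr rfl hpiece, Finset.sum_const, Finset.card_powersetCard,
        Finset.card_univ, Fintype.card_fin, smul_eq_mul, Nat.mul_assoc]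
    · intro S hS S' hS' hne
      rw [Function.onFun, Finset.disjoint_left]
      intro y hyS hyS'
      apply hne
      have mem3 : ∀ (T : Finset (Fin m)), (∀ i, y i ∈ if i ∈ T then A i else B i) →
          ∀ i, (i ∈ T ↔ hammingDist (x i) (y i) = 3) := by
        intro T hT i
        constructor
        · intro hi; have h := hT i; rw [if_pos hi, hA] at h; simp at h; exact h.2
        · intro h3
          by_contra hi
          have h := hT i; rw [if_neg hi, hB] at h; simp at h; omega
      rw [Fintype.mem_piFinset] at hyS hyS'
      ext i
      rw [mem3 S hyS i, mem3 S' hyS' i]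
  · rintro y ⟨hw, hc, hd⟩
    have hle : t' ≤ m := by
      rw [← hc]
      calc (Finset.univ.filter (fun i : Fin m => hammingDist (x i) (y i) = 3)).card
          ≤ Finset.univ.card := Finset.card_filter_le _ _
        _ = m := by simp
    constructor
    · set S3 := Finset.univ.filter (fun i : Fin m => hammingDist (x i) (y i) = 3) with hS3
      have h3 : ∑ i ∈ S3, hammingDist (x i) (y i) = 3 * t' := by
        rw [Finset.sum_congr rfl (fun i hi => (Finset.mem_filter.mp hi).2),
          Finset.sum_const, hc, smul_eq_mul, Nat.mul_comm]
      have h1 : ∑ i ∈ Finset.univ \ S3, hammingDist (x i) (y i) = m - t' := by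
        have : ∀ i ∈ Finset.univ \ S3, hammingDist (x i) (y i) = 1 := by
          intro i hi
          rcases hd i with h | h
          · exfalso; exact (Finset.mem_sdiff.mp hi).2 (by simp [hS3, h])
          · exact h
        rw [Finset.sum_congr rfl this, Finset.sum_const,
          Finset.card_sdiff_of_subset (Finset.subset_univ S3), hc]
        simp
      rw [hdist, ← Finset.sum_sdiff (Finset.subset_univ S3), h1, h3, Nat.add_comm]
    · omega
end

section
/- Fix x ∈ S(m,L,w) and m₀ ≤ m. Let S̃ be the set of binary words of length mL whose first m₀ subblocks have weight at least w−1 and whose remaining subblocks have weight at least w. For nonnegative integers t₁, t₂ with t₁ + t₂ ≤ t, the number of y ∈ S̃ at Hamming distance at most t from x such that each subblock of y differs from the corresponding subblock of x in at most one position is at least Σ_{t₁+t₂≤t} C(m₀,t₁)·C(m−m₀,t₂)·L^{t₁}·(L−w)^{t₂}. -/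
open Finset

lemma wt_le_flip {L : ℕ} (b : Fin L → Bool) (j : Fin L) :
    wt b ≤ wt (Function.update b j (!b j)) + 1 := by
  unfold wt
  have h : (univ.filter fun k => b k = true) ⊆
      insert j (univ.filter fun k => Function.update b j (!b j) k = true) := by
    intro k hk
    simp only [mem_filter, mem_insert, mem_univ, true_and] at *
    by_cases hkj : k = j
    · left; exact hkj
    · right; rw [Function.update_of_ne hkj]; exact hk
  calc _ ≤ (insert j (univ.filter fun k => Function.update b j (!b j) k = true)).card :=
        card_le_card h
    _ ≤ _ + 1 := card_insert_le _ _

lemma wt_flip_of_false {L : ℕ} (b : Fin L → Bool) (j : Fin L) (h : b j = false) :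
    wt b ≤ wt (Function.update b j (!b j)) := by
  apply card_le_card
  intro k hk
  simp only [mem_filter, mem_univ, true_and] at *
  rcases eq_or_ne k j with rfl | hne
  · rw [hk] at h; cases h
  · rw [Function.update_of_ne hne]; exact hk

lemma card_false_eq {L : ℕ} (b : Fin L → Bool) :
    (univ.filter fun j => b j = false).card = L - wt b := by
  have h1 : (univ.filter fun j => b j = true).card +
      (univ.filter fun j => ¬ (b j = true)).card = L := by
    rw [Finset.card_filter_add_card_filter_not, card_univ, Fintype.card_fin]
  have h2 : (univ.filter fun j => b j = false) = univ.filter fun j => ¬ (b j = true) := by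
    apply filter_congr; intro j _; simp
  rw [h2]; unfold wt; omega

lemma good_card {L w : ℕ} (b : Fin L → Bool) (hb : w ≤ wt b) :
    L - w ≤ (univ.filter fun j => w ≤ wt (Function.update b j (!b j))).card := by
  rcases lt_or_eq_of_le hb with hlt | heq
  · have h : (univ.filter fun j => w ≤ wt (Function.update b j (!b j))) = univ := by
      apply filter_true_of_mem
      intro j _
      have := wt_le_flip b j
      omega
    rw [h, card_univ, Fintype.card_fin]; omega
  · have hsub : (univ.filter fun j => b j = false) ⊆
        (univ.filter fun j => w ≤ wt (Function.update b j (!b j))) := by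
      intro j hj
      simp only [mem_filter, mem_univ, true_and] at *
      have := wt_flip_of_false b j hj
      omega
    have := card_le_card hsub
    rw [card_false_eq] at this
    omega

lemma hamming_flip {L : ℕ} (b : Fin L → Bool) (j : Fin L) :
    hammingDist b (Function.update b j (!b j)) = 1 := by
  have h0 : hammingDist b (Function.update b j (!b j)) =
      (univ.filter fun k => b k ≠ Function.update b j (!b j) k).card := rfl
  rw [h0, Finset.card_eq_one]
  refine ⟨j, ?_⟩
  ext k
  simp only [mem_filter, mem_univ, true_and, mem_singleton]
  constructor
  · intro h; by_contra hk; rw [Function.update_of_ne hk] at h; exact h rfl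
  · rintro rfl
    rw [Function.update_self]
    simp

/-- The ball-size estimate in the proof of Proposition 13: for
`x ∈ S(m,L,w)` and `m₀ ≤ m`, the number of words `y` whose first `m₀`
subblocks have weight `≥ w-1`, whose remaining subblocks have weight `≥ w`,
with `τ(x,y) ≤ t` and each subblock of `y` differing from the corresponding
subblock of `x` in at most one position, is at least
`Σ_{t₁+t₂≤t} C(m₀,t₁)·C(m-m₀,t₂)·L^{t₁}·(L-w)^{t₂}`. -/
theorem stmt_16 (m L w t m₀ : ℕ) (hw1 : 1 ≤ w) (hw2 : w ≤ L) (hm₀ : m₀ ≤ m)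
    (x : Fin m → Fin L → Bool) (hx : ∀ i, w ≤ wt (x i)) :
    ∑ t₁ ∈ Finset.range (t + 1), ∑ t₂ ∈ Finset.range (t + 1 - t₁),
        Nat.choose m₀ t₁ * Nat.choose (m - m₀) t₂ * L ^ t₁ * (L - w) ^ t₂ ≤
      (Finset.univ.filter (fun y : Fin m → Fin L → Bool =>
        (∀ i : Fin m, (i : ℕ) < m₀ → w - 1 ≤ wt (y i)) ∧
        (∀ i : Fin m, m₀ ≤ (i : ℕ) → w ≤ wt (y i)) ∧
        hdist x y ≤ t ∧
        ∀ i, hammingDist (x i) (y i) ≤ 1)).card := by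
  classical
  have hL : 1 ≤ L := le_trans hw1 hw2
  set R₁ : Finset (Fin m) := univ.filter (fun i => (i : ℕ) < m₀) with hR₁def
  set R₂ : Finset (Fin m) := univ.filter (fun i => m₀ ≤ (i : ℕ)) with hR₂def
  have hR₁card : R₁.card = m₀ := by
    rw [← Finset.card_range m₀]
    apply Finset.card_bij (fun (i : Fin m) _ => (i : ℕ))
    · intro a ha; simp only [hR₁def, mem_filter, mem_univ, true_and] at ha
      simpa using ha
    · intro a _ b _ h; exact Fin.ext h
    · intro b hb
      simp only [mem_range] at hb
      exact ⟨⟨b, lt_of_lt_of_le hb hm₀⟩, by simp [hR₁def, hb], rfl⟩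
  have hR₂card : R₂.card = m - m₀ := by
    have h : R₂ = univ \ R₁ := by
      ext i; simp [hR₁def, hR₂def, not_lt]
    rw [h, card_sdiff_of_subset (subset_univ _), card_univ, Fintype.card_fin, hR₁card]
  -- good flip positions for each block
  choose Bi hBisub hBicard using
    fun i : Fin m => Finset.exists_subset_card_eq (good_card (x i) (hx i))
  set j0 : Fin L := ⟨0, hL⟩ with hj0def
  set piF : Finset (Fin m) → Finset (Fin m) → Finset (Fin m → Fin L) :=
    fun A B => Fintype.piFinset (fun i =>
      if i ∈ A then (univ : Finset (Fin L)) else if i ∈ B then Bi i else {j0}) with hpiFdef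
  -- the configuration finset
  set K := ((Finset.range (t + 1)).sigma fun t₁ => Finset.range (t + 1 - t₁)).sigma
      (fun p => ((R₁.powersetCard p.1 ×ˢ R₂.powersetCard p.2).sigma
        (fun AB => piF AB.1 AB.2))) with hKdef
  -- disjointness of chosen block sets
  have hABdisj : ∀ {A B : Finset (Fin m)}, A ⊆ R₁ → B ⊆ R₂ → Disjoint A B := by
    intro A B hA hB
    rw [Finset.disjoint_left]
    intro a haA haB
    have h1 := hA haA
    have h2 := hB haB
    simp only [hR₁def, hR₂def, mem_filter, mem_univ, true_and] at h1 h2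
    omega
  -- cardinality of piF
  have hpiFcard : ∀ A B : Finset (Fin m), Disjoint A B →
      (piF A B).card = L ^ A.card * (L - w) ^ B.card := by
    intro A B hAB
    rw [hpiFdef]
    rw [Fintype.card_piFinset]
    rw [← Finset.prod_subset (subset_univ (A ∪ B)) (fun i _ hni => by
      simp only [mem_union, not_or] at hni
      simp [hni.1, hni.2])]
    rw [Finset.prod_union hAB]
    have h1 : ∀ i ∈ A, ((if i ∈ A then (univ : Finset (Fin L))
        else if i ∈ B then Bi i else {j0})).card = L := by
      intro i hi; simp [hi]
    have h2 : ∀ i ∈ B, ((if i ∈ A then (univ : Finset (Fin L))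
        else if i ∈ B then Bi i else {j0})).card = L - w := by
      intro i hi
      have hiA : i ∉ A := Finset.disjoint_right.mp hAB hi
      simp [hiA, hi, hBicard]
    rw [Finset.prod_congr rfl h1, Finset.prod_congr rfl h2, prod_const, prod_const]
  -- card of K equals the LHS
  have hK : K.card = ∑ t₁ ∈ Finset.range (t + 1), ∑ t₂ ∈ Finset.range (t + 1 - t₁),
      Nat.choose m₀ t₁ * Nat.choose (m - m₀) t₂ * L ^ t₁ * (L - w) ^ t₂ := by
    rw [hKdef, Finset.card_sigma, Finset.sum_sigma]
    refine Finset.sum_congr rfl fun t₁ _ => Finset.sum_congr rfl fun t₂ _ => ?_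
    rw [Finset.card_sigma]
    have hterm : ∀ AB ∈ R₁.powersetCard t₁ ×ˢ R₂.powersetCard t₂,
        (piF AB.1 AB.2).card = L ^ t₁ * (L - w) ^ t₂ := by
      rintro ⟨A, B⟩ hAB
      rw [Finset.mem_product] at hAB
      obtain ⟨hA, hB⟩ := hAB
      rw [Finset.mem_powersetCard] at hA hB
      rw [hpiFcard A B (hABdisj hA.1 hB.1), hA.2, hB.2]
    rw [Finset.sum_congr rfl hterm, Finset.sum_const, Finset.card_product,
      Finset.card_powersetCard, Finset.card_powersetCard, hR₁card, hR₂card, smul_eq_mul]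
    ring
  rw [← hK]
  -- the injection
  set Φ : (Σ _p : (Σ _ : ℕ, ℕ), Σ _AB : Finset (Fin m) × Finset (Fin m), (Fin m → Fin L)) →
      (Fin m → Fin L → Bool) :=
    fun k => fun i j => if i ∈ k.2.1.1 ∪ k.2.1.2 ∧ j = k.2.2 i then !(x i j) else x i j
    with hΦdef
  -- block descriptions
  have hblock_eq : ∀ (A B : Finset (Fin m)) (f : Fin m → Fin L) (i : Fin m), i ∉ A ∪ B →
      Φ ⟨⟨0,0⟩, ⟨A,B⟩, f⟩ i = x i := by
    intro A B f i hi
    funext j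
    show (if i ∈ A ∪ B ∧ j = f i then !(x i j) else x i j) = x i j
    rw [if_neg (fun h => hi h.1)]
  have hblock_flip : ∀ (A B : Finset (Fin m)) (f : Fin m → Fin L) (i : Fin m), i ∈ A ∪ B →
      Φ ⟨⟨0,0⟩, ⟨A,B⟩, f⟩ i = Function.update (x i) (f i) (!(x i (f i))) := by
    intro A B f i hi
    funext j
    show (if i ∈ A ∪ B ∧ j = f i then !(x i j) else x i j)
        = Function.update (x i) (f i) (!(x i (f i))) j
    by_cases hj : j = f i
    · subst hj; rw [if_pos ⟨hi, rfl⟩, Function.update_self]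
    · rw [if_neg (fun h => hj h.2), Function.update_of_ne hj]
  have hΦval : ∀ (p : Σ _ : ℕ, ℕ) (A B : Finset (Fin m)) (f : Fin m → Fin L),
      Φ ⟨p, ⟨A,B⟩, f⟩ = Φ ⟨⟨0,0⟩, ⟨A,B⟩, f⟩ := fun _ _ _ _ => rfl
  apply Finset.card_le_card_of_injOn Φ
  · -- maps into the target
    rintro ⟨⟨t₁, t₂⟩, ⟨A, B⟩, f⟩ hk
    simp only [hKdef, Finset.mem_coe, Finset.mem_sigma, Finset.mem_product, Finset.mem_range,
      Finset.mem_powersetCard] at hk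
    obtain ⟨⟨ht₁, ht₂⟩, ⟨⟨hA1, hA2⟩, ⟨hB1, hB2⟩⟩, hf⟩ := hk
    rw [Fintype.mem_piFinset] at hf
    set y := Φ ⟨⟨t₁, t₂⟩, ⟨A, B⟩, f⟩ with hydef
    have hyflip : ∀ i ∈ A ∪ B, y i = Function.update (x i) (f i) (!(x i (f i))) :=
      fun i hi => hblock_flip A B f i hi
    have hysame : ∀ (i : Fin m), i ∉ A ∪ B → y i = x i :=
      fun i hi => hblock_eq A B f i hi
    have hdisj := hABdisj hA1 hB1
    simp only [Finset.mem_coe, mem_filter, mem_univ, true_and]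
    refine ⟨?_, ?_, ?_, ?_⟩
    · intro i _
      by_cases hi : i ∈ A ∪ B
      · rw [hyflip i hi]
        have := wt_le_flip (x i) (f i)
        have := hx i
        omega
      · rw [hysame i hi]
        have := hx i
        omega
    · intro i him
      by_cases hi : i ∈ A ∪ B
      · have hiA : i ∉ A := by
          intro h
          have := hA1 h
          simp only [hR₁def, mem_filter, mem_univ, true_and] at this
          omega
        have hiB : i ∈ B := by
          rcases Finset.mem_union.mp hi with h | h
          · exact absurd h hiA
          · exact h
        have hfB : f i ∈ Bi i := by
          have := hf i
          simp only [if_neg hiA, if_pos hiB] at this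
          exact this
        have := hBisub i hfB
        simp only [mem_filter, mem_univ, true_and] at this
        rw [hyflip i hi]
        exact this
      · rw [hysame i hi]; exact hx i
    · -- hdist ≤ t
      have hsum : hdist x y = (A ∪ B).card := by
        unfold hdist
        rw [← Finset.sum_subset (subset_univ (A ∪ B)) (fun i _ hni => by
          rw [hysame i hni]
          simp [hammingDist_self])]
        rw [Finset.sum_congr rfl (fun i hi => by
          rw [hyflip i hi, hamming_flip]), Finset.sum_const, smul_eq_mul, mul_one]
      rw [hsum, Finset.card_union_of_disjoint hdisj, hA2, hB2]
      omega
    · intro i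
      by_cases hi : i ∈ A ∪ B
      · rw [hyflip i hi, hamming_flip]
      · rw [hysame i hi, hammingDist_self]; omega
  · -- injectivity
    rintro ⟨⟨t₁, t₂⟩, ⟨A, B⟩, f⟩ hk ⟨⟨t₁', t₂'⟩, ⟨A', B'⟩, f'⟩ hk' heq
    simp only [hKdef, Set.mem_setOf_eq, Finset.mem_coe, Finset.mem_sigma,
      Finset.mem_product, Finset.mem_range, Finset.mem_powersetCard] at hk hk'
    obtain ⟨⟨ht₁, ht₂⟩, ⟨⟨hA1, hA2⟩, ⟨hB1, hB2⟩⟩, hf⟩ := hk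
    obtain ⟨⟨ht₁', ht₂'⟩, ⟨⟨hA1', hA2'⟩, ⟨hB1', hB2'⟩⟩, hf'⟩ := hk'
    rw [Fintype.mem_piFinset] at hf hf'
    -- characterize the union
    have hkey : ∀ (A B : Finset (Fin m)) (f : Fin m → Fin L) (i : Fin m),
        i ∈ A ∪ B ↔ Φ ⟨⟨0,0⟩, ⟨A,B⟩, f⟩ i ≠ x i := by
      intro A B f i
      constructor
      · intro hi h
        have := congrFun h (f i)
        rw [hblock_flip A B f i hi] at this
        rw [Function.update_self] at this
        simp at this
      · intro h
        by_contra hi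
        exact h (hblock_eq A B f i hi)
    have hunion : A ∪ B = A' ∪ B' := by
      ext i
      rw [hkey A B f i, hkey A' B' f' i]
      rw [show Φ ⟨⟨0,0⟩, ⟨A,B⟩, f⟩ = Φ ⟨⟨0,0⟩, ⟨A',B'⟩, f'⟩ from heq]
    have hAchar : ∀ (A B : Finset (Fin m)), A ⊆ R₁ → B ⊆ R₂ →
        A = Finset.filter (fun i : Fin m => (i : ℕ) < m₀) (A ∪ B) := by
      intro A B hA hB
      ext i
      simp only [mem_filter, mem_union]
      constructor
      · intro hi
        have := hA hi
        simp only [hR₁def, mem_filter, mem_univ, true_and] at this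
        exact ⟨Or.inl hi, this⟩
      · rintro ⟨h | h, hlt⟩
        · exact h
        · have := hB h
          simp only [hR₂def, mem_filter, mem_univ, true_and] at this
          omega
    have hBchar : ∀ (A B : Finset (Fin m)), A ⊆ R₁ → B ⊆ R₂ →
        B = Finset.filter (fun i : Fin m => m₀ ≤ (i : ℕ)) (A ∪ B) := by
      intro A B hA hB
      ext i
      simp only [mem_filter, mem_union]
      constructor
      · intro hi
        have := hB hi
        simp only [hR₂def, mem_filter, mem_univ, true_and] at this
        exact ⟨Or.inr hi, this⟩
      · rintro ⟨h | h, hle⟩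
        · have := hA h
          simp only [hR₁def, mem_filter, mem_univ, true_and] at this
          omega
        · exact h
    have hAA : A = A' := by
      rw [hAchar A B hA1 hB1, hAchar A' B' hA1' hB1', hunion]
    have hBB : B = B' := by
      rw [hBchar A B hA1 hB1, hBchar A' B' hA1' hB1', hunion]
    have htt1 : t₁ = t₁' := by rw [← hA2, ← hA2', hAA]
    have htt2 : t₂ = t₂' := by rw [← hB2, ← hB2', hBB]
    subst hAA; subst hBB; subst htt1; subst htt2
    have hff : f = f' := by
      funext i
      by_cases hi : i ∈ A ∪ B
      · by_contra hne
        have h1 : (if i ∈ A ∪ B ∧ f i = f i then !(x i (f i)) else x i (f i))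
            = (if i ∈ A ∪ B ∧ f i = f' i then !(x i (f i)) else x i (f i)) :=
          congrFun (congrFun heq i) (f i)
        rw [if_pos ⟨hi, rfl⟩, if_neg (fun h => hne h.2)] at h1
        simp at h1
      · have h1 := hf i
        have h2 := hf' i
        simp only [mem_union, not_or] at hi
        simp only [if_neg hi.1, if_neg hi.2, Finset.mem_singleton] at h1 h2
        rw [h1, h2]
    subst hff
    rfl
end
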